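/- arXiv:1911.02911 — 4 statements merged into one kernel-verified Lean document; each statement's English description precedes it below -/
import Mathlib

section
/- Let (S,F) be a maximization problem with a linear programming formulation of size R, let f ∈ F, and suppose the formulation certifies the upper bound c on f, i.e. the maximum of ⟨w^f, y⟩ over the (nonempty) polytope {y : Ay ≤ β} is attained and is at most c. Then there exist nonnegative reals p₀,…,p_R ≥ 0 and nonnegative functions q₀,…,q_R : S → ℝ≥0 such that c - f(s) = Σ_{i=0}^{R} p_i q_i(s) for all s ∈ S; moreover the functions q_i can be chosen independently of f, so that for every f ∈ F on which the formulation certifies an upper bound c_f there are nonnegative reals p_i(f) with c_f - f(s) = Σ_{i=0}^{R} p_i(f) q_i(s) for all s ∈ S. -/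
open Finset Matrix
open scoped BigOperators Classical

lemma isClosed_finsetCone {E : Type*} [NormedAddCommGroup E] [NormedSpace ℝ E]
    {ι : Type*} [Fintype ι] [DecidableEq ι] (v : ι → E) (s : Finset ι) :
    IsClosed {x : E | ∃ c : ι → ℝ, (∀ i, 0 ≤ c i) ∧ ∑ i ∈ s, c i • v i = x} := by
  classical
  induction s using Finset.strongInduction with
  | _ s ih =>
    have hattach : ∀ (cc : ι → ℝ), ∑ i ∈ s, cc i • v i = ∑ i : ↥s, cc i.1 • v i.1 :=
      fun cc => (Finset.sum_attach s (fun j => cc j • v j)).symm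
    by_cases hli : LinearIndependent ℝ (fun i : ↥s => v i.1)
    · -- linearly independent generators: closed embedding of the orthant
      let L : (↥s → ℝ) →ₗ[ℝ] E :=
        { toFun := fun c => ∑ i : ↥s, c i • v i.1
          map_add' := by intro a b; simp [add_smul, Finset.sum_add_distrib]
          map_smul' := by intro m a; simp [smul_smul, Finset.smul_sum] }
      have hker : LinearMap.ker L = ⊥ := by
        rw [LinearMap.ker_eq_bot']
        intro m hm
        have := Fintype.linearIndependent_iff.mp hli m hm
        funext i; exact this i
      have hemb := LinearMap.isClosedEmbedding_of_injective (f := L) hker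
      have hOrth : IsClosed {c : ↥s → ℝ | ∀ i, 0 ≤ c i} := by
        have : {c : ↥s → ℝ | ∀ i, 0 ≤ c i} = ⋂ i, {c | 0 ≤ c i} := by
          ext; simp [Set.mem_iInter]
        rw [this]
        exact isClosed_iInter fun i => isClosed_le continuous_const (continuous_apply i)
      have hseteq : {x : E | ∃ c : ι → ℝ, (∀ i, 0 ≤ c i) ∧ ∑ i ∈ s, c i • v i = x}
          = L '' {c : ↥s → ℝ | ∀ i, 0 ≤ c i} := by
        ext x
        constructor
        · rintro ⟨c, hc, hsum⟩
          exact ⟨fun i => c i.1, fun i => hc i.1, by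
            show ∑ i : ↥s, c i.1 • v i.1 = x
            rw [← hattach]; exact hsum⟩
        · rintro ⟨c, hc, rfl⟩
          refine ⟨fun i => if h : i ∈ s then c ⟨i, h⟩ else 0, ?_, ?_⟩
          · intro i; dsimp only; split
            · exact hc _
            · exact le_rfl
          · rw [hattach]
            show (∑ i : ↥s, _ • v i.1) = L c
            refine Finset.sum_congr rfl fun i _ => ?_
            rw [dif_pos i.2]
      rw [hseteq]
      exact hemb.isClosedMap _ hOrth
    · -- linearly dependent: reduce to smaller cones
      rw [Fintype.linearIndependent_iff] at hli
      push_neg at hli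
      obtain ⟨g, hg0, i₀, hgi₀⟩ := hli
      have hg2 : ∃ g2 : ↥s → ℝ, (∑ i : ↥s, g2 i • v i.1 = 0) ∧ g2 i₀ < 0 := by
        rcases lt_or_gt_of_ne hgi₀ with h | h
        · exact ⟨g, hg0, h⟩
        · exact ⟨-g, by simpa using hg0, by simpa using h⟩
      obtain ⟨g2, hg2sum, hg2neg⟩ := hg2
      set gext : ι → ℝ := fun i => if h : i ∈ s then g2 ⟨i, h⟩ else 0 with hgext_def
      have hgextsum : ∑ i ∈ s, gext i • v i = 0 := by
        rw [hattach]
        rw [← hg2sum]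
        refine Finset.sum_congr rfl fun i _ => ?_
        simp [hgext_def, i.2]
      set N : Finset ι := s.filter (fun i => gext i < 0) with hN_def
      have hi₀N : (i₀ : ι) ∈ N := by
        rw [hN_def, Finset.mem_filter]
        refine ⟨i₀.2, ?_⟩
        simpa [hgext_def, i₀.2] using hg2neg
      have hseteq : {x : E | ∃ c : ι → ℝ, (∀ i, 0 ≤ c i) ∧ ∑ i ∈ s, c i • v i = x}
          = ⋃ i ∈ N, {x : E | ∃ c : ι → ℝ, (∀ i, 0 ≤ c i) ∧ ∑ j ∈ s.erase i, c j • v j = x} := by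
        ext x
        simp only [Set.mem_setOf_eq, Set.mem_iUnion]
        constructor
        · rintro ⟨c, hc, hsum⟩
          obtain ⟨i₁, hi₁N, hmin⟩ :=
            N.exists_min_image (fun i => c i / (-gext i)) ⟨i₀, hi₀N⟩
          have hgi₁ : gext i₁ < 0 := (Finset.mem_filter.mp hi₁N).2
          set t : ℝ := c i₁ / (-gext i₁) with ht_def
          have ht0 : 0 ≤ t := div_nonneg (hc _) (by linarith)
          have hzero : c i₁ + t * gext i₁ = 0 := by
            have hne : -gext i₁ ≠ 0 := by linarith
            have hq : c i₁ / -gext i₁ * gext i₁ = -c i₁ := by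
              rw [div_mul_eq_mul_div, div_eq_iff hne]; ring
            rw [ht_def]; linarith
          refine ⟨i₁, hi₁N, fun i => c i + t * gext i, ?_, ?_⟩
          · intro i
            dsimp only
            by_cases hgs : gext i < 0
            · have his : i ∈ s := by
                by_contra hns
                simp [hgext_def, hns] at hgs
              have hiN : i ∈ N := Finset.mem_filter.mpr ⟨his, hgs⟩
              have h1 := hmin i hiN
              have h2 : t * (-gext i) ≤ c i := (le_div_iff₀ (by linarith)).mp h1
              have h3 : t * -gext i = -(t * gext i) := by ring
              linarith
            · exact add_nonneg (hc i) (mul_nonneg ht0 (not_lt.mp hgs))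
          · have hsum2 : ∑ j ∈ s, (c j + t * gext j) • v j = x := by
              have : ∀ j, (c j + t * gext j) • v j = c j • v j + t • (gext j • v j) := by
                intro j; rw [add_smul, smul_smul]
              simp_rw [this]
              rw [Finset.sum_add_distrib, ← Finset.smul_sum, hgextsum, smul_zero, add_zero, hsum]
            have hterm : (c i₁ + t * gext i₁) • v i₁ = 0 := by rw [hzero, zero_smul]
            rw [Finset.sum_erase s hterm]
            exact hsum2
        · rintro ⟨i, hiN, c, hc, hsum⟩
          refine ⟨fun j => if j ∈ s.erase i then c j else 0, ?_, ?_⟩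
          · intro j; dsimp only; split
            · exact hc _
            · exact le_rfl
          · rw [← Finset.sum_subset (Finset.erase_subset i s)
              (fun j _ hj => by simp [hj])]
            rw [← hsum]
            refine Finset.sum_congr rfl fun j hj => ?_
            dsimp only
            rw [if_pos hj]
      rw [hseteq]
      exact Set.Finite.isClosed_biUnion (N.finite_toSet)
        (fun i hi => ih (s.erase i)
          (Finset.erase_ssubset (Finset.mem_filter.mp hi).1))


lemma mem_cone_of_dual_nonpos {E : Type*} [NormedAddCommGroup E] [NormedSpace ℝ E]
    {n : ℕ} (v : Fin n → E) (x : E)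
    (h : ∀ φ : E →L[ℝ] ℝ, (∀ i, φ (v i) ≤ 0) → φ x ≤ 0) :
    ∃ c : Fin n → ℝ, (∀ i, 0 ≤ c i) ∧ ∑ i, c i • v i = x := by
  classical
  by_contra hx
  set C : Set E := {y : E | ∃ c : Fin n → ℝ, (∀ i, 0 ≤ c i) ∧ ∑ i ∈ Finset.univ, c i • v i = y}
    with hC_def
  have hxC : x ∉ C := by
    intro ⟨c, hc, hsum⟩
    exact hx ⟨c, hc, hsum⟩
  have hclosed : IsClosed C := isClosed_finsetCone v Finset.univ
  have hconv : Convex ℝ C := by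
    rintro a ⟨ca, hca, hcas⟩ b ⟨cb, hcb, hcbs⟩ θ₁ θ₂ hθ₁ hθ₂ hθ
    refine ⟨fun i => θ₁ * ca i + θ₂ * cb i,
      fun i => add_nonneg (mul_nonneg hθ₁ (hca i)) (mul_nonneg hθ₂ (hcb i)), ?_⟩
    have : ∀ i, (θ₁ * ca i + θ₂ * cb i) • v i = θ₁ • (ca i • v i) + θ₂ • (cb i • v i) := by
      intro i; rw [add_smul, smul_smul, smul_smul]
    simp_rw [this]
    rw [Finset.sum_add_distrib, ← Finset.smul_sum, ← Finset.smul_sum, hcas, hcbs]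
  have hscale : ∀ (m : ℝ), 0 ≤ m → ∀ a ∈ C, m • a ∈ C := by
    rintro m hm a ⟨c, hc, hsum⟩
    refine ⟨fun i => m * c i, fun i => mul_nonneg hm (hc i), ?_⟩
    simp_rw [mul_smul]
    rw [← Finset.smul_sum, hsum]
  have h0C : (0 : E) ∈ C := ⟨0, fun i => le_rfl, by simp⟩
  have hvC : ∀ i, v i ∈ C := by
    intro i
    refine ⟨fun j => if j = i then 1 else 0, fun j => by positivity, ?_⟩
    simp [ite_smul]
  obtain ⟨f, u, hfu, hux⟩ := geometric_hahn_banach_closed_point hconv hclosed hxC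
  have hu0 : 0 < u := by simpa using hfu 0 h0C
  have hfa : ∀ a ∈ C, f a ≤ 0 := by
    intro a ha
    by_contra hpos
    push_neg at hpos
    have hm : (0:ℝ) ≤ (u + 1) / f a := by positivity
    have := hfu _ (hscale _ hm a ha)
    rw [_root_.map_smul, smul_eq_mul, div_mul_cancel₀ _ (ne_of_gt hpos)] at this
    linarith
  have := h f (fun i => hfa _ (hvC i))
  linarith

lemma prodFstSum {ι M N : Type*} [AddCommMonoid M] [AddCommMonoid N] (s : Finset ι)
    (f : ι → M × N) : (∑ i ∈ s, f i).1 = ∑ i ∈ s, (f i).1 :=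
  map_sum (AddMonoidHom.fst M N) f s

lemma prodSndSum {ι M N : Type*} [AddCommMonoid M] [AddCommMonoid N] (s : Finset ι)
    (f : ι → M × N) : (∑ i ∈ s, f i).2 = ∑ i ∈ s, (f i).2 :=
  map_sum (AddMonoidHom.snd M N) f s

lemma farkas_lp {R d : ℕ} (A : Matrix (Fin R) (Fin d) ℝ) (bvec : Fin R → ℝ)
    (hne : ∃ v : Fin d → ℝ, A.mulVec v ≤ bvec) (w : Fin d → ℝ) (c : ℝ)
    (hc : ∀ v : Fin d → ℝ, A.mulVec v ≤ bvec → dotProduct w v ≤ c) :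
    ∃ y : Fin (R + 1) → ℝ, (∀ i, 0 ≤ y i) ∧
      (∀ j, ∑ i : Fin R, y i.castSucc * A i j = w j) ∧
      (∑ i : Fin R, y i.castSucc * bvec i) + y (Fin.last R) = c := by
  classical
  set g : Fin (R + 1) → ((Fin d → ℝ) × ℝ) :=
    fun i => Fin.lastCases ((0 : Fin d → ℝ), (1 : ℝ)) (fun i0 => (A i0, bvec i0)) i with hg_def
  have hglast : g (Fin.last R) = ((0 : Fin d → ℝ), (1 : ℝ)) := by
    simp [hg_def]
  have hgcast : ∀ i0 : Fin R, g i0.castSucc = (A i0, bvec i0) := by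
    intro i0; simp [hg_def]
  have key : ∃ y : Fin (R + 1) → ℝ, (∀ i, 0 ≤ y i) ∧ ∑ i, y i • g i = ((w, c) : ((Fin d → ℝ) × ℝ)) := by
    apply mem_cone_of_dual_nonpos
    intro φ hφ
    set u : Fin d → ℝ := fun j => φ ((Pi.single j 1 : Fin d → ℝ), (0 : ℝ)) with hu_def
    set t : ℝ := φ ((0 : Fin d → ℝ), (1 : ℝ)) with ht_def
    have hrep : ∀ (p : Fin d → ℝ) (r : ℝ), φ (p, r) = (∑ j, p j * u j) + r * t := by
      intro p r
      have hp : ((p, r) : ((Fin d → ℝ) × ℝ))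
          = (∑ j, p j • (((Pi.single j 1 : Fin d → ℝ), (0 : ℝ)) : ((Fin d → ℝ) × ℝ)))
            + r • (((0 : Fin d → ℝ), (1 : ℝ)) : ((Fin d → ℝ) × ℝ)) := by
        refine Prod.ext ?_ ?_
        · simp only [Prod.fst_sum, Prod.smul_fst, Prod.fst_add]
          have : ∀ j, p j • (Pi.single j 1 : Fin d → ℝ) = Pi.single j (p j) := by
            intro j
            ext k
            by_cases hk : k = j <;> simp [Pi.single_apply, hk]
          simp_rw [this]
          simp [Finset.univ_sum_single]
        · simp [Prod.snd_sum]
      rw [hp, map_add, map_sum, _root_.map_smul]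
      simp only [_root_.map_smul, smul_eq_mul]
      rfl
    have ht : t ≤ 0 := by
      have := hφ (Fin.last R)
      rwa [hglast] at this
    have hrow : ∀ i : Fin R, (∑ j, A i j * u j) + bvec i * t ≤ 0 := by
      intro i
      have := hφ i.castSucc
      rwa [hgcast i, hrep] at this
    show φ ((w, c) : ((Fin d → ℝ) × ℝ)) ≤ 0
    rw [hrep]
    rcases ht.lt_or_eq with htneg | hteq
    · set vv : Fin d → ℝ := fun j => u j / (-t) with hv_def
      have hfeasv : A.mulVec vv ≤ bvec := by
        intro i
        show (A.mulVec vv) i ≤ bvec i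
        have hmv : (A.mulVec vv) i = (∑ j, A i j * u j) / (-t) := by
          simp only [Matrix.mulVec, dotProduct, hv_def, Finset.sum_div]
          refine Finset.sum_congr rfl fun j _ => ?_
          ring
        rw [hmv, div_le_iff₀ (by linarith)]
        have := hrow i
        nlinarith
      have hdot := hc vv hfeasv
      have hdot2 : dotProduct w vv = (∑ j, w j * u j) / (-t) := by
        simp only [dotProduct, hv_def, Finset.sum_div]
        refine Finset.sum_congr rfl fun j _ => ?_
        ring
      rw [hdot2, div_le_iff₀ (by linarith)] at hdot
      nlinarith
    · obtain ⟨v₀, hv₀⟩ := hne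
      by_contra hpos
      push_neg at hpos
      have hS : 0 < ∑ j, w j * u j := by
        have hct : c * t = 0 := by rw [hteq, mul_zero]
        linarith
      set lam : ℝ := max 0 ((c - dotProduct w v₀ + 1) / (∑ j, w j * u j)) with hlam_def
      have hlam0 : 0 ≤ lam := le_max_left _ _
      have hfeasv : A.mulVec (v₀ + lam • u) ≤ bvec := by
        intro i
        have hmvu : (A.mulVec u) i ≤ 0 := by
          have := hrow i
          rw [← hteq] at this
          simpa [Matrix.mulVec, dotProduct, hteq] using this
        have : (A.mulVec (v₀ + lam • u)) i = (A.mulVec v₀) i + lam * (A.mulVec u) i := by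
          rw [Matrix.mulVec_add, Matrix.mulVec_smul]
          simp
        rw [this]
        have := hv₀ i
        nlinarith
      have hdot := hc _ hfeasv
      have hdot2 : dotProduct w (v₀ + lam • u)
          = dotProduct w v₀ + lam * ∑ j, w j * u j := by
        rw [dotProduct_add, dotProduct_smul]
        simp [dotProduct, smul_eq_mul]
      have hlam2 : (c - dotProduct w v₀ + 1) / (∑ j, w j * u j) ≤ lam :=
        le_max_right _ _
      rw [div_le_iff₀ hS] at hlam2
      rw [hdot2] at hdot
      linarith
  obtain ⟨y, hy, hsum⟩ := key
  rw [Fin.sum_univ_castSucc] at hsum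
  have h1 := congrArg Prod.fst hsum
  have h2 := congrArg Prod.snd hsum
  rw [Prod.fst_add, prodFstSum] at h1
  rw [Prod.snd_add, prodSndSum] at h2
  simp only [hglast, hgcast, Prod.smul_fst, Prod.smul_snd, smul_zero, add_zero,
    smul_eq_mul, mul_one] at h1 h2
  refine ⟨y, hy, fun j => ?_, ?_⟩
  · have := congrFun h1 j
    simpa [Finset.sum_apply] using this
  · simpa using h2

/-- a linear programming formulation of size `R` of a maximization problem
certifying an upper bound `c` on an objective `f` yields a nonnegative representation
`c - f(s) = Σ_{i=0}^R p_i(f) q_i(s)`, with the nonnegative functions `q_i` chosen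
independently of `f`. -/
theorem lp_nonnegative_representation {S : Type*} [Fintype S] [Nonempty S]
    (F : Finset (S → ℝ)) (hF : ∀ f ∈ F, ∀ s : S, 0 ≤ f s)
    (R d : ℕ) (A : Matrix (Fin R) (Fin d) ℝ) (bvec : Fin R → ℝ)
    (pt : S → Fin d → ℝ) (w : (S → ℝ) → Fin d → ℝ)
    (hfeas : ∀ s : S, A.mulVec (pt s) ≤ bvec)
    (hlin : ∀ f ∈ F, ∀ s : S, dotProduct (w f) (pt s) = f s)
    (hne : ∃ v : Fin d → ℝ, A.mulVec v ≤ bvec) :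
    ∃ q : Fin (R + 1) → S → ℝ,
      (∀ i s, 0 ≤ q i s) ∧
      ∀ f ∈ F, ∀ c : ℝ,
        (∀ v : Fin d → ℝ, A.mulVec v ≤ bvec → dotProduct (w f) v ≤ c) →
        ∃ pc : Fin (R + 1) → ℝ, (∀ i, 0 ≤ pc i) ∧
          ∀ s : S, c - f s = ∑ i : Fin (R + 1), pc i * q i s := by
  classical
  refine ⟨fun i => Fin.lastCases (fun _ => (1 : ℝ))
      (fun i0 s => bvec i0 - A.mulVec (pt s) i0) i, ?_, ?_⟩
  · intro i s
    induction i using Fin.lastCases with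
    | last => simp
    | cast i0 =>
      simp only [Fin.lastCases_castSucc]
      exact sub_nonneg.mpr (hfeas s i0)
  · intro f hf c hc
    obtain ⟨y, hy, hw, hb⟩ := farkas_lp A bvec hne (w f) c hc
    refine ⟨y, hy, fun s => ?_⟩
    rw [Fin.sum_univ_castSucc]
    simp only [Fin.lastCases_castSucc, Fin.lastCases_last, mul_one]
    have hAs : ∑ i : Fin R, y i.castSucc * (A.mulVec (pt s)) i = f s := by
      have swap : ∑ i : Fin R, y i.castSucc * (A.mulVec (pt s)) i
          = ∑ j : Fin d, (∑ i : Fin R, y i.castSucc * A i j) * pt s j := by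
        simp only [Matrix.mulVec, dotProduct, Finset.mul_sum, Finset.sum_mul]
        rw [Finset.sum_comm]
        exact Finset.sum_congr rfl fun j _ => Finset.sum_congr rfl fun i _ => by ring
      rw [swap]
      have h2 : ∑ j : Fin d, (∑ i : Fin R, y i.castSucc * A i j) * pt s j
          = ∑ j : Fin d, w f j * pt s j :=
        Finset.sum_congr rfl fun j _ => by rw [hw j]
      rw [h2]
      have := hlin f hf s
      simpa [dotProduct] using this
    have hexp : ∑ i : Fin R, y i.castSucc * (bvec i - A.mulVec (pt s) i)
        = ∑ i : Fin R, y i.castSucc * bvec i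
          - ∑ i : Fin R, y i.castSucc * (A.mulVec (pt s)) i := by
      rw [← Finset.sum_sub_distrib]
      exact Finset.sum_congr rfl fun i _ => by ring
    rw [hexp, hAs]
    linarith [hb]
end

section
/- For all α ⊆ [n], β ⊆ E_{n,k}, γ ⊆ E_{n,k}×[k]: if the Fourier coefficient μ̂*(α,β,γ) = E_{(x,y,b)∼D*}[χ_α(x)φ_β(y)ψ_γ(b)] is nonzero, then γ ⊢ α. -/
open Finset Matrix
open scoped BigOperators Classical

noncomputable section

namespace RandomCSP

/-- Scopes: `k`-tuples of distinct indices in `[n]`, i.e. injective maps `Fin k → Fin n`. -/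
abbrev Scope (n k : ℕ) := {S : Fin k → Fin n // Function.Injective S}

/-- An instance of a CSP: for each scope an inclusion bit (`true` encodes `y_S = -1`,
i.e. the constraint on scope `S` is included) and a tuple of negation bits
(`true` encodes `-1`). -/
abbrev Inst (n k : ℕ) := (Scope n k → Bool) × (Scope n k → Fin k → Bool)

/-- Assignments to the `n` variables (`true` encodes `-1`). -/
abbrev Assign (n : ℕ) := Fin n → Bool

/-- Sign encoding: `true ↦ -1`, `false ↦ 1`. -/
def sgn (b : Bool) : ℝ := if b then -1 else 1

/-- The bits of the tuple `b_S ∘ x_S` (the product of signs is the xor of the bits). -/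
def litBits (n k : ℕ) (x : Assign n) (I : Inst n k) (S : Scope n k) : Fin k → Bool :=
  fun j => xor (I.2 S j) (x (S.1 j))

/-- Probability mass of an instance under the distribution `D(p)`: each scope is included
independently with probability `p` and all negation bits are independent uniform bits. -/
def dpMass (n k : ℕ) (p : ℝ) (I : Inst n k) : ℝ :=
  (∏ S : Scope n k, if I.1 S then p else 1 - p) * (1 / 2) ^ (Fintype.card (Scope n k) * k)

/-- Background mass on pairs (assignment, instance): uniform × `D(p)`. -/
def bgMass (n k : ℕ) (p : ℝ) (w : Assign n × Inst n k) : ℝ :=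
  (1 / 2) ^ n * dpMass n k p w.2

/-- Probability mass of the planted distribution `D*` determined by a density `ηP` on
`{-1,1}^k`: `x` is uniform, each scope is included independently with probability `p`;
on included scopes `b_S = z_S ∘ x_S` with `z_S ∼ ηP`, on excluded scopes `b_S` is uniform. -/
def plantedMass (n k : ℕ) (p : ℝ) (ηP : (Fin k → Bool) → ℝ) (w : Assign n × Inst n k) : ℝ :=
  (1 / 2) ^ n * ∏ S : Scope n k,
    (if w.2.1 S then p * (ηP (litBits n k w.1 w.2 S) * (1 / 2) ^ k)
     else (1 - p) * (1 / 2) ^ k)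

/-- The planted density `μ*` relative to uniform × `D(p)`. -/
def muStar (n k : ℕ) (p : ℝ) (ηP : (Fin k → Bool) → ℝ) (w : Assign n × Inst n k) : ℝ :=
  plantedMass n k p ηP w / bgMass n k p w

/-- `P` supports a `(t-1)`-wise uniform distribution on satisfying assignments, with
density `ηP` relative to the uniform distribution on `{-1,1}^k`. -/
def SupportsUniform (k t : ℕ) (P : (Fin k → Bool) → Bool) (ηP : (Fin k → Bool) → ℝ) : Prop :=
  (∀ z, 0 ≤ ηP z) ∧
  ((1 / 2 : ℝ) ^ k * ∑ z : Fin k → Bool, ηP z) = 1 ∧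
  (∀ z, ηP z ≠ 0 → P z = true) ∧
  ∀ T : Finset (Fin k), T.card = t - 1 → ∀ a : Fin k → Bool,
    ((1 / 2 : ℝ) ^ k * ∑ z : Fin k → Bool, if ∀ j ∈ T, z j = a j then ηP z else 0)
      = (1 / 2 : ℝ) ^ (t - 1)

/-- The objective value `F(x,y,b) = Σ_S 1(y_S = -1)·P(b_S ∘ x_S)`. -/
def objVal (n k : ℕ) (P : (Fin k → Bool) → Bool) (x : Assign n) (I : Inst n k) : ℝ :=
  ∑ S : Scope n k, if I.1 S = true ∧ P (litBits n k x I S) = true then 1 else 0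

/-- Parity character `χ_α`. -/
def chiF (n : ℕ) (α : Finset (Fin n)) (x : Assign n) : ℝ := ∏ i ∈ α, sgn (x i)

/-- The `p`-biased single coordinate character: `φ(-1) = -√(q/p)`, `φ(1) = √(p/q)`. -/
def phiY (p : ℝ) (v : Bool) : ℝ :=
  if v then -Real.sqrt ((1 - p) / p) else Real.sqrt (p / (1 - p))

/-- The `p`-biased character `φ_β` on the inclusion bits. -/
def phiF (n k : ℕ) (p : ℝ) (β : Finset (Scope n k)) (y : Scope n k → Bool) : ℝ :=
  ∏ S ∈ β, phiY p (y S)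

/-- The character `ψ_γ` on the negation bits. -/
def psiF (n k : ℕ) (γ : Finset (Scope n k × Fin k)) (b : Scope n k → Fin k → Bool) : ℝ :=
  ∏ e ∈ γ, sgn (b e.1 e.2)

/-- `γ̄`: the set of scopes present in `γ`. -/
def scopesOf (n k : ℕ) (γ : Finset (Scope n k × Fin k)) : Finset (Scope n k) :=
  γ.image Prod.fst

/-- The Fourier coefficient `f̂(α,β,γ)` of a function on pairs (assignment, instance),
with respect to the background measure uniform × `D(p)`. -/
def fhat (n k : ℕ) (p : ℝ) (f : Assign n × Inst n k → ℝ)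
    (α : Finset (Fin n)) (β : Finset (Scope n k)) (γ : Finset (Scope n k × Fin k)) : ℝ :=
  ∑ w : Assign n × Inst n k,
    bgMass n k p w * f w * chiF n α w.1 * phiF n k p β w.2.1 * psiF n k γ w.2.2

/-- The Fourier coefficient of the planted density:
`μ̂*(α,β,γ) = E_{(x,y,b) ∼ D*}[χ_α(x) φ_β(y) ψ_γ(b)]`. -/
def muHat (n k : ℕ) (p : ℝ) (ηP : (Fin k → Bool) → ℝ)
    (α : Finset (Fin n)) (β : Finset (Scope n k)) (γ : Finset (Scope n k × Fin k)) : ℝ :=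
  ∑ w : Assign n × Inst n k,
    plantedMass n k p ηP w * chiF n α w.1 * phiF n k p β w.2.1 * psiF n k γ w.2.2

/-- The low-degree projection `L_d`, keeping exactly the Fourier terms `χ_α φ_β ψ_γ`
with `|α| ≤ d_x` and `|β ∪ γ̄| ≤ d_I`. -/
def Ld (n k : ℕ) (p : ℝ) (dx dI : ℕ) (f : Assign n × Inst n k → ℝ) :
    Assign n × Inst n k → ℝ :=
  fun w => ∑ α : Finset (Fin n), ∑ β : Finset (Scope n k), ∑ γ : Finset (Scope n k × Fin k),
    if α.card ≤ dx ∧ (β ∪ scopesOf n k γ).card ≤ dI then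
      fhat n k p f α β γ * chiF n α w.1 * phiF n k p β w.2.1 * psiF n k γ w.2.2
    else 0

/-- Override the coordinates of `I` on the scopes in `U` by those of `J`. -/
def override (n k : ℕ) (U : Finset (Scope n k)) (J I : Inst n k) : Inst n k :=
  (fun S => if S ∈ U then J.1 S else I.1 S,
   fun S j => if S ∈ U then J.2 S j else I.2 S j)

/-- The restriction `R_U f`: fix the instance coordinates on the scopes in `U`
to the restricted instance given by `J`. -/
def restrictU (n k : ℕ) (U : Finset (Scope n k)) (J : Inst n k)
    (f : Assign n × Inst n k → ℝ) : Assign n × Inst n k → ℝ :=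
  fun w => f (w.1, override n k U J w.2)

/-- `V(U)`: the set of variable indices appearing in the scopes of `U`. -/
def varsOf (n k : ℕ) (U : Finset (Scope n k)) : Finset (Fin n) :=
  U.biUnion fun S => Finset.image S.1 Finset.univ

/-- Agreement of `w'` with `w` on a block of variables `V` and scopes `U`. -/
def agreeOn (n k : ℕ) (V : Finset (Fin n)) (U : Finset (Scope n k))
    (w' w : Assign n × Inst n k) : Prop :=
  (∀ i ∈ V, w'.1 i = w.1 i) ∧
  ∀ S ∈ U, w'.2.1 S = w.2.1 S ∧ ∀ j, w'.2.2 S j = w.2.2 S j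

/-- Marginal probability under the mass function `μ` of agreeing with `w` on `(V, U)`. -/
def marg (n k : ℕ) (μ : Assign n × Inst n k → ℝ)
    (V : Finset (Fin n)) (U : Finset (Scope n k)) (w : Assign n × Inst n k) : ℝ :=
  ∑ w' : Assign n × Inst n k, if agreeOn n k V U w' w then μ w' else 0

/-- `π_U(x_V, I_U) = Pr_{D*}[x_V, I_U] / Pr_{uniform×D(p)}[x_V, I_U]`. -/
def piU (n k : ℕ) (p : ℝ) (ηP : (Fin k → Bool) → ℝ) (U : Finset (Scope n k))
    (w : Assign n × Inst n k) : ℝ :=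
  marg n k (plantedMass n k p ηP) (varsOf n k U) U w /
    marg n k (bgMass n k p) (varsOf n k U) U w

/-- The conditioned planted density `μ*|_U(x, I_{Uᶜ}) =
Pr_{D*}[x_{Vᶜ}, I_{Uᶜ} | x_V, I_U] / Pr_{D(p)}[x_{Vᶜ}, I_{Uᶜ}]`, viewed as a function of
all of `x` and of the instance coordinates outside `U` (fixed to `J` on `U`). -/
def condMu (n k : ℕ) (p : ℝ) (ηP : (Fin k → Bool) → ℝ) (U : Finset (Scope n k)) (J : Inst n k)
    (w : Assign n × Inst n k) : ℝ :=
  (plantedMass n k p ηP (w.1, override n k U J w.2) /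
      marg n k (plantedMass n k p ηP) (varsOf n k U) U (w.1, J)) /
    marg n k (bgMass n k p) (varsOf n k U)ᶜ Uᶜ (w.1, override n k U J w.2)

/-- Fourier coefficients of the conditioned planted density. -/
def condMuHat (n k : ℕ) (p : ℝ) (ηP : (Fin k → Bool) → ℝ)
    (U : Finset (Scope n k)) (J : Inst n k)
    (α : Finset (Fin n)) (β : Finset (Scope n k)) (γ : Finset (Scope n k × Fin k)) : ℝ :=
  fhat n k p (condMu n k p ηP U J) α β γ

/-- `γ ⊢ α`: every index of `α` appears an odd number of times as some `S_j` with
`(S,j) ∈ γ`, and every other index appears an even number of times. -/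
def derives (n k : ℕ) (γ : Finset (Scope n k × Fin k)) (α : Finset (Fin n)) : Prop :=
  ∀ i : Fin n, i ∈ α ↔ Odd (γ.filter fun e => e.1.1 e.2 = i).card

/-- `r(γ) ≥ t`: every scope present in `γ` contributes at least `t` coordinates. -/
def arityGE (n k : ℕ) (γ : Finset (Scope n k × Fin k)) (t : ℕ) : Prop :=
  ∀ S ∈ scopesOf n k γ, t ≤ (γ.filter fun e => e.1 = S).card

/-- `N_r(α)`: the number of pairs `(β,γ)` with `γ ⊢ α`, `r(γ) ≥ t`, `β ⊆ γ̄`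
and `|γ̄| = r`. -/
def Ncount (n k t : ℕ) (α : Finset (Fin n)) (r : ℕ) : ℕ :=
  (Finset.univ.filter fun bg : Finset (Scope n k) × Finset (Scope n k × Fin k) =>
    derives n k bg.2 α ∧ arityGE n k bg.2 t ∧ bg.1 ⊆ scopesOf n k bg.2 ∧
      (scopesOf n k bg.2).card = r).card

/-- `D` is a probability mass function. -/
def IsDist {Ω : Type*} [Fintype Ω] (D : Ω → ℝ) : Prop :=
  (∀ I, 0 ≤ D I) ∧ (∑ I : Ω, D I) = 1

/-- Marginal probability under `D` that an instance agrees with `I'` on the scopes of `V`. -/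
def imarg (n k : ℕ) (D : Inst n k → ℝ) (V : Finset (Scope n k)) (I' : Inst n k) : ℝ :=
  ∑ I : Inst n k,
    if ∀ S ∈ V, I.1 S = I'.1 S ∧ ∀ j, I.2 S j = I'.2 S j then D I else 0

/-- `D` is a `d`-conjunctive blockwise-dense distribution with parameter `δ` relative to
`D(p)`, with fixed block `U` fixed to the restricted instance given by `J`. -/
def IsCBD (n k : ℕ) (p : ℝ) (D : Inst n k → ℝ) (d δ : ℝ)
    (U : Finset (Scope n k)) (J : Inst n k) : Prop :=
  IsDist D ∧ (U.card : ℝ) ≤ d ∧ imarg n k D U J = 1 ∧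
  ∀ V : Finset (Scope n k), Disjoint V U → ∀ I' : Inst n k,
    imarg n k D V I' ≤ imarg n k (dpMass n k p) V I' ^ (1 - δ)

/-- `E_{I ∼ D}[φ_β(y) ψ_γ(b)]`. -/
def expBasis (n k : ℕ) (p : ℝ) (D : Inst n k → ℝ)
    (β : Finset (Scope n k)) (γ : Finset (Scope n k × Fin k)) : ℝ :=
  ∑ I : Inst n k, D I * phiF n k p β I.1 * psiF n k γ I.2

/-- The sup norm `‖φ_β ψ_γ‖_∞`. -/
def supPhiPsi (n k : ℕ) (p : ℝ) (β : Finset (Scope n k))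
    (γ : Finset (Scope n k × Fin k)) : ℝ :=
  max (Real.sqrt ((1 - p) / p)) (Real.sqrt (p / (1 - p))) ^ β.card

/-- `μ*` exhibits `ε(s_x, s_I)`-conditional Fourier decay, witnessed by the bounds `B`. -/
def CondDecay (n k : ℕ) (p : ℝ) (ηP : (Fin k → Bool) → ℝ) (dx dI b : ℕ) (δ : ℝ)
    (ε : ℕ → ℕ → ℝ)
    (B : Finset (Scope n k) → Finset (Fin n) → Finset (Scope n k) →
      Finset (Scope n k × Fin k) → ℝ) : Prop :=
  (∀ (D : Inst n k → ℝ) (U : Finset (Scope n k)) (J : Inst n k),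
      IsCBD n k p D (b : ℝ) δ U J →
      (∀ α β γ, |condMuHat n k p ηP U J α β γ| ≤ B U α β γ) ∧
      ∀ α : Finset (Fin n), α.card ≤ dx → ∀ sI : ℕ, sI ≤ dI →
        (∑ β : Finset (Scope n k), ∑ γ : Finset (Scope n k × Fin k),
            if sI ≤ (β ∪ scopesOf n k γ).card ∧ (β ∪ scopesOf n k γ).card ≤ dI then
              B U α β γ * expBasis n k p D β γ
            else 0)
          ≤ (n.choose α.card : ℝ) ^ (-(1 : ℝ) / 2) * ε α.card sI) ∧
  ∀ (α : Finset (Fin n)) (β β' : Finset (Scope n k)) (γ γ' : Finset (Scope n k × Fin k)),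
    Disjoint (β ∪ scopesOf n k γ) (β' ∪ scopesOf n k γ') →
    B ∅ α (β ∪ β') (γ ∪ γ') * supPhiPsi n k p β' γ' ≤ B ∅ α β γ

/-- The conditional Fourier decay rate for CSPs:
`ε(s_x, s_I) = (CΔ)^s (s/n)^{((t-2)/2)s} (s/s_x)^{s_x/2}` with `s = max(⌈s_x/k⌉, s_I)`. -/
def epsCSP (n k t : ℕ) (Δ C : ℝ) (sx sI : ℕ) : ℝ :=
  let s : ℕ := max (Nat.ceil ((sx : ℝ) / k)) sI
  (C * Δ) ^ s * ((s : ℝ) / n) ^ (((t : ℝ) - 2) / 2 * s) * ((s : ℝ) / sx) ^ ((sx : ℝ) / 2)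

/-- The error term `h` from the decomposition
`R_U μ̄* = π_U · L_{d''}(μ*|_U) + h`. -/
def errH (n k : ℕ) (p : ℝ) (ηP : (Fin k → Bool) → ℝ) (dx dI : ℕ)
    (U : Finset (Scope n k)) (J : Inst n k) : Assign n × Inst n k → ℝ :=
  fun w =>
    (Ld n k p dx (dI - U.card) (restrictU n k U J (muStar n k p ηP)) w
        - Ld n k p dx (dI - 2 * U.card) (restrictU n k U J (muStar n k p ηP)) w)
      + (restrictU n k U J (Ld n k p dx dI (muStar n k p ηP)) w
        - Ld n k p dx (dI - U.card)
            (restrictU n k U J (Ld n k p dx dI (muStar n k p ηP))) w)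

/-- A linear programming formulation of `CSP(P)` of size `R`. -/
structure LPForm (n k : ℕ) (P : (Fin k → Bool) → Bool) (R : ℕ) where
  dim : ℕ
  A : Matrix (Fin R) (Fin dim) ℝ
  bvec : Fin R → ℝ
  pt : Assign n → Fin dim → ℝ
  wt : Inst n k → Fin dim → ℝ
  feas : ∀ x, A.mulVec (pt x) ≤ bvec
  linearize : ∀ I x, dotProduct (wt I) (pt x) = objVal n k P x I

/-- The LP formulation certifies the upper bound `c` on the objective of instance `I`. -/
def Certifies {n k : ℕ} {P : (Fin k → Bool) → Bool} {R : ℕ}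
    (L : LPForm n k P R) (I : Inst n k) (c : ℝ) : Prop :=
  ∀ v : Fin L.dim → ℝ, L.A.mulVec v ≤ L.bvec → dotProduct (L.wt I) v ≤ c

end RandomCSP

end
namespace RandomCSP

/-- nonzero Fourier coefficients of the planted density satisfy `γ ⊢ α`. -/
theorem muHat_ne_zero_derives (n k t : ℕ) (hk : 2 ≤ k) (htk : t ≤ k) (hn : k ≤ n)
    (P : (Fin k → Bool) → Bool) (ηP : (Fin k → Bool) → ℝ)
    (hP : SupportsUniform k t P ηP)
    (p : ℝ) (hp0 : 0 < p) (hp1 : p < 1)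
    (α : Finset (Fin n)) (β : Finset (Scope n k)) (γ : Finset (Scope n k × Fin k)) :
    muHat n k p ηP α β γ ≠ 0 → derives n k γ α := by
  intro hμ
  by_contra hnd
  apply hμ
  unfold derives at hnd
  push_neg at hnd
  obtain ⟨i, hi⟩ := hnd
  set c : ℕ := (γ.filter fun e => e.1.1 e.2 = i).card with hc
  have hsign : (if i ∈ α then (-1:ℝ) else 1) * (-1) ^ c = -1 := by
    rcases hi with ⟨hiα, hnodd⟩ | ⟨hiα, hodd⟩
    · rw [Nat.not_odd_iff_even] at hnodd
      simp [hiα, hnodd.neg_one_pow]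
    · simp [hiα, hodd.neg_one_pow]
  set T : Assign n × Inst n k → Assign n × Inst n k :=
    fun w => ((fun j => if j = i then !w.1 j else w.1 j),
      (w.2.1, fun S j => if S.1 j = i then !w.2.2 S j else w.2.2 S j)) with hT
  have hinv : Function.Involutive T := by
    intro w
    simp only [hT]
    refine Prod.ext ?_ (Prod.ext rfl ?_)
    · funext j
      by_cases h : j = i <;> simp [h]
    · funext S j
      by_cases h : S.1 j = i <;> simp [h]
  have hlit : ∀ w : Assign n × Inst n k, ∀ S : Scope n k,
      litBits n k (T w).1 (T w).2 S = litBits n k w.1 w.2 S := by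
    intro w S
    funext j
    simp only [litBits, hT]
    by_cases h : S.1 j = i <;> simp [h]
  have hplanted : ∀ w : Assign n × Inst n k,
      plantedMass n k p ηP (T w) = plantedMass n k p ηP w := by
    intro w
    simp only [plantedMass]
    congr 1
    refine Finset.prod_congr rfl fun S _ => ?_
    rw [hlit w S]
  have hsgnnot : ∀ b : Bool, sgn (!b) = - sgn b := by
    intro b; cases b <;> simp [sgn]
  have hchi : ∀ w : Assign n × Inst n k,
      chiF n α (T w).1 = (if i ∈ α then (-1:ℝ) else 1) * chiF n α w.1 := by
    intro w
    simp only [chiF, hT]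
    by_cases hiα : i ∈ α
    · rw [if_pos hiα, ← Finset.mul_prod_erase α _ hiα,
        ← Finset.mul_prod_erase α (fun j => sgn (w.1 j)) hiα]
      have h1 : sgn (if i = i then !w.1 i else w.1 i) = - sgn (w.1 i) := by
        rw [if_pos rfl, hsgnnot]
      rw [h1]
      have h2 : ∏ j ∈ α.erase i, sgn (if j = i then !w.1 j else w.1 j)
          = ∏ j ∈ α.erase i, sgn (w.1 j) := by
        refine Finset.prod_congr rfl fun j hj => ?_
        rw [if_neg (Finset.ne_of_mem_erase hj)]
      rw [h2]; ring
    · rw [if_neg hiα, one_mul]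
      refine Finset.prod_congr rfl fun j hj => ?_
      rw [if_neg (fun h => hiα (by rwa [h] at hj))]
  have hpsi : ∀ w : Assign n × Inst n k,
      psiF n k γ (T w).2.2 = (-1:ℝ) ^ c * psiF n k γ w.2.2 := by
    intro w
    simp only [psiF, hT]
    have h1 : ∀ e ∈ γ, sgn (if e.1.1 e.2 = i then !w.2.2 e.1 e.2 else w.2.2 e.1 e.2)
        = (if e.1.1 e.2 = i then (-1:ℝ) else 1) * sgn (w.2.2 e.1 e.2) := by
      intro e _
      by_cases h : e.1.1 e.2 = i <;> simp [h, hsgnnot]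
    rw [Finset.prod_congr rfl h1, Finset.prod_mul_distrib, Finset.prod_ite,
      Finset.prod_const, Finset.prod_const_one, mul_one, hc]
  set Fn : Assign n × Inst n k → ℝ := fun w =>
    plantedMass n k p ηP w * chiF n α w.1 * phiF n k p β w.2.1 * psiF n k γ w.2.2 with hFn
  have hneg : ∀ w, Fn (T w) = - Fn w := by
    intro w
    have hphi : phiF n k p β (T w).2.1 = phiF n k p β w.2.1 := rfl
    simp only [hFn]
    rw [hplanted w, hchi w, hphi, hpsi w]
    calc plantedMass n k p ηP w * ((if i ∈ α then (-1:ℝ) else 1) * chiF n α w.1) *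
          phiF n k p β w.2.1 * ((-1:ℝ) ^ c * psiF n k γ w.2.2)
        = ((if i ∈ α then (-1:ℝ) else 1) * (-1:ℝ) ^ c) *
            (plantedMass n k p ηP w * chiF n α w.1 * phiF n k p β w.2.1 *
              psiF n k γ w.2.2) := by ring
      _ = - (plantedMass n k p ηP w * chiF n α w.1 * phiF n k p β w.2.1 *
              psiF n k γ w.2.2) := by rw [hsign]; ring
  have hsum : ∑ w : Assign n × Inst n k, Fn (T w) = ∑ w : Assign n × Inst n k, Fn w :=
    Equiv.sum_comp hinv.toPerm Fn
  have hsum2 : ∑ w : Assign n × Inst n k, Fn (T w)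
      = - ∑ w : Assign n × Inst n k, Fn w := by
    simp_rw [hneg]
    exact Finset.sum_neg_distrib Fn
  have hzero : ∑ w : Assign n × Inst n k, Fn w = 0 := by linarith [hsum ▸ hsum2]
  exact hzero

end RandomCSP
end

section
/- For all α ⊆ [n], β ⊆ E_{n,k}, γ ⊆ E_{n,k}×[k]: if γ ⊢ α, r(γ) ≥ t and β ⊆ γ̄, then |μ̂*(α,β,γ)| ≤ √(pq)^{|γ̄ ∩ β|} · p^{|γ̄ \ β|}; and if any of these three conditions fails, then μ̂*(α,β,γ) = 0. -/
open Finset Matrix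
open scoped BigOperators Classical

namespace RandomCSP

noncomputable section Aux

variable {n k t : ℕ} {p : ℝ} {ηP : (Fin k → Bool) → ℝ}

lemma sgn_eq (b : Bool) : sgn b = (-1 : ℝ) ^ (if b then 1 else 0) := by
  cases b <;> simp [sgn]

lemma abs_sgn (b : Bool) : |sgn b| = 1 := by cases b <;> simp [sgn]

lemma sgn_xor (a b : Bool) : sgn (xor a b) = sgn a * sgn b := by
  cases a <;> cases b <;> simp [sgn]

lemma sum_sgn_pow (e : ℕ) : ∑ b : Bool, sgn b ^ e = if Even e then 2 else 0 := by
  rw [Fintype.sum_bool]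
  rcases Nat.even_or_odd e with h | h
  · simp [sgn, h.neg_one_pow, h]; norm_num
  · simp [sgn, h.neg_one_pow, Nat.not_even_iff_odd.mpr h]

/-- The Fourier coefficient of the density `ηP` on `{-1,1}^k`. -/
def etaHat (k : ℕ) (ηP : (Fin k → Bool) → ℝ) (T : Finset (Fin k)) : ℝ :=
  (1 / 2) ^ k * ∑ z : Fin k → Bool, ηP z * ∏ j ∈ T, sgn (z j)

lemma etaHat_empty (h1 : ((1 / 2 : ℝ) ^ k * ∑ z : Fin k → Bool, ηP z) = 1) :
    etaHat k ηP (∅ : Finset (Fin k)) = 1 := by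
  simpa [etaHat] using h1

lemma abs_etaHat_le (h0 : ∀ z, 0 ≤ ηP z)
    (h1 : ((1 / 2 : ℝ) ^ k * ∑ z : Fin k → Bool, ηP z) = 1) (T : Finset (Fin k)) :
    |etaHat k ηP T| ≤ 1 := by
  rw [etaHat, abs_mul, abs_of_nonneg (by positivity : (0:ℝ) ≤ (1/2:ℝ)^k)]
  calc (1/2:ℝ)^k * |∑ z : Fin k → Bool, ηP z * ∏ j ∈ T, sgn (z j)|
      ≤ (1/2:ℝ)^k * ∑ z : Fin k → Bool, |ηP z * ∏ j ∈ T, sgn (z j)| := by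
        gcongr; exact Finset.abs_sum_le_sum_abs _ _
    _ = (1/2:ℝ)^k * ∑ z : Fin k → Bool, ηP z := by
        congr 1; refine Finset.sum_congr rfl fun z _ => ?_
        rw [abs_mul, abs_of_nonneg (h0 z), Finset.abs_prod]
        simp [abs_sgn]
    _ = 1 := h1
lemma sum_fun_prod {ι : Type*} [Fintype ι] [DecidableEq ι] (g : ι → Bool → ℝ) :
    ∑ a : ι → Bool, ∏ i, g i (a i) = ∏ i, (g i false + g i true) := by
  rw [← Fintype.prod_sum]
  exact Finset.prod_congr rfl fun i _ => by rw [Fintype.sum_bool]; ring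

lemma sum_prod_sgn {ι : Type*} [Fintype ι] [DecidableEq ι] (T : Finset ι) (hT : T.Nonempty) :
    ∑ a : ι → Bool, ∏ j ∈ T, sgn (a j) = 0 := by
  have h : ∀ a : ι → Bool, ∏ j ∈ T, sgn (a j)
      = ∏ j : ι, (if j ∈ T then sgn (a j) else 1) := by
    intro a; rw [Finset.prod_ite_mem, Finset.univ_inter]
  simp_rw [h]
  rw [sum_fun_prod (fun j b => if j ∈ T then sgn b else 1)]
  obtain ⟨j0, hj0⟩ := hT
  refine Finset.prod_eq_zero (Finset.mem_univ j0) ?_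
  simp [hj0, sgn]

lemma etaHat_eq_zero {P : (Fin k → Bool) → Bool} (hP : SupportsUniform k t P ηP)
    (htk : t ≤ k) (T : Finset (Fin k)) (hne : T.Nonempty) (hcard : T.card ≤ t - 1) :
    etaHat k ηP T = 0 := by
  obtain ⟨T', hTT', -, hT'card⟩ := Finset.exists_subsuperset_card_eq T.subset_univ hcard
    (by simpa using le_trans (Nat.sub_le t 1) htk)
  have key : ∀ z : Fin k → Bool,
      (∑ a : Fin k → Bool, if ∀ j ∈ T', z j = a j then ∏ j ∈ T, sgn (a j) else 0)
        = 2 ^ (k - (t - 1)) * ∏ j ∈ T, sgn (z j) := by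
    intro z
    have hA : ∀ a : Fin k → Bool,
        (if ∀ j ∈ T', z j = a j then ∏ j ∈ T, sgn (a j) else 0)
          = ∏ j : Fin k, (if j ∈ T' then (if a j = z j then
              (if j ∈ T then sgn (a j) else 1) else 0) else 1) := by
      intro a
      by_cases h : ∀ j ∈ T', z j = a j
      · rw [if_pos h, Finset.prod_ite_mem, Finset.univ_inter]
        have : ∀ j ∈ T', (if a j = z j then (if j ∈ T then sgn (a j) else 1) else 0)
            = (if j ∈ T then sgn (a j) else 1) := fun j hj => by rw [if_pos (h j hj).symm]
        rw [Finset.prod_congr rfl this, Finset.prod_ite_mem,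
          Finset.inter_eq_right.mpr hTT']
      · rw [if_neg h]
        push_neg at h
        obtain ⟨j0, hj0, hne0⟩ := h
        exact (Finset.prod_eq_zero (Finset.mem_univ j0) (by simp [hj0, Ne.symm hne0])).symm
    simp_rw [hA]
    rw [sum_fun_prod (fun j b => if j ∈ T' then (if b = z j then (if j ∈ T then sgn b else 1) else 0) else 1)]
    have hB : ∀ j : Fin k,
        ((if j ∈ T' then (if false = z j then (if j ∈ T then sgn false else 1) else 0) else 1)
          + (if j ∈ T' then (if true = z j then (if j ∈ T then sgn true else 1) else 0) else 1))
        = if j ∈ T' then (if j ∈ T then sgn (z j) else 1) else 2 := by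
      intro j; by_cases hj : j ∈ T' <;> cases hz : z j <;> simp [hj, hz] <;> norm_num
    rw [Finset.prod_congr rfl fun j _ => hB j]
    rw [← Finset.prod_filter_mul_prod_filter_not Finset.univ (· ∈ T')]
    have hf1 : Finset.univ.filter (· ∈ T') = T' := by ext j; simp
    have hf2 : (Finset.univ.filter (¬ · ∈ T')) = T'ᶜ := by ext j; simp
    rw [hf1, hf2]
    have : ∏ j ∈ T', (if j ∈ T' then (if j ∈ T then sgn (z j) else 1) else 2)
        = ∏ j ∈ T, sgn (z j) := by
      rw [Finset.prod_congr rfl (fun j hj => if_pos hj), Finset.prod_ite_mem,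
        Finset.inter_eq_right.mpr hTT']
    rw [this]
    have : ∏ j ∈ T'ᶜ, (if j ∈ T' then (if j ∈ T then sgn (z j) else 1) else (2:ℝ))
        = 2 ^ (k - (t-1)) := by
      rw [Finset.prod_congr rfl (fun j hj => if_neg (Finset.mem_compl.mp hj)),
        Finset.prod_const, Finset.card_compl, hT'card, Fintype.card_fin]
    rw [this]; ring
  have hQ1 : (∑ a : Fin k → Bool, (∏ j ∈ T, sgn (a j)) *
      ((1/2:ℝ)^k * ∑ z : Fin k → Bool, if ∀ j ∈ T', z j = a j then ηP z else 0)) = 0 := by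
    have := hP.2.2.2 T' hT'card
    simp_rw [fun a => this a]
    rw [← Finset.sum_mul]
    exact mul_eq_zero_of_left (sum_prod_sgn T hne) _
  have hQ2 : (∑ a : Fin k → Bool, (∏ j ∈ T, sgn (a j)) *
      ((1/2:ℝ)^k * ∑ z : Fin k → Bool, if ∀ j ∈ T', z j = a j then ηP z else 0))
      = 2 ^ (k - (t-1)) * etaHat k ηP T := by
    simp_rw [Finset.mul_sum]
    rw [Finset.sum_comm]
    have hz : ∀ z : Fin k → Bool,
        (∑ a : Fin k → Bool, (∏ j ∈ T, sgn (a j)) *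
          ((1/2:ℝ)^k * if ∀ j ∈ T', z j = a j then ηP z else 0))
        = (1/2:ℝ)^k * ηP z * (2 ^ (k - (t-1)) * ∏ j ∈ T, sgn (z j)) := by
      intro z
      rw [← key z, Finset.mul_sum]
      refine Finset.sum_congr rfl fun a _ => ?_
      by_cases h : ∀ j ∈ T', z j = a j <;> simp [h] <;> ring
    rw [Finset.sum_congr rfl fun z _ => hz z, etaHat, Finset.mul_sum, Finset.mul_sum]
    exact Finset.sum_congr rfl fun z _ => by ring
  have h2 : (2:ℝ) ^ (k - (t-1)) ≠ 0 := by positivity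
  have := hQ1 ▸ hQ2
  exact (mul_eq_zero.mp this.symm).resolve_left h2
/-- The coordinates of scope `S` used by `γ`. -/
def fibJ (γ : Finset (Scope n k × Fin k)) (S : Scope n k) : Finset (Fin k) :=
  Finset.univ.filter fun j => (S, j) ∈ γ

lemma mem_scopesOf_iff {γ : Finset (Scope n k × Fin k)} {S : Scope n k} :
    S ∈ scopesOf n k γ ↔ (fibJ γ S).Nonempty := by
  simp only [scopesOf, Finset.mem_image, Finset.Nonempty, fibJ, Finset.mem_filter,
    Finset.mem_univ, true_and]
  constructor
  · rintro ⟨⟨S', j⟩, he, rfl⟩; exact ⟨j, he⟩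
  · rintro ⟨j, hj⟩; exact ⟨(S, j), hj, rfl⟩

lemma filter_fst_eq (γ : Finset (Scope n k × Fin k)) (S : Scope n k) :
    γ.filter (fun e => e.1 = S) = (fibJ γ S).image (fun j => (S, j)) := by
  ext ⟨S', j⟩
  simp only [Finset.mem_filter, Finset.mem_image, fibJ, Finset.mem_univ, true_and,
    Prod.mk.injEq]
  constructor
  · rintro ⟨he, rfl⟩; exact ⟨j, he, rfl, rfl⟩
  · rintro ⟨j', hj', rfl, rfl⟩; exact ⟨hj', rfl⟩

lemma card_filter_fst (γ : Finset (Scope n k × Fin k)) (S : Scope n k) :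
    (γ.filter fun e => e.1 = S).card = (fibJ γ S).card := by
  rw [filter_fst_eq, Finset.card_image_of_injective]
  intro a b h; simpa using h

lemma prod_gamma (γ : Finset (Scope n k × Fin k)) (f : Scope n k × Fin k → ℝ) :
    ∏ e ∈ γ, f e = ∏ S : Scope n k, ∏ j ∈ fibJ γ S, f (S, j) := by
  rw [← Finset.prod_fiberwise γ Prod.fst f]
  refine Finset.prod_congr rfl fun S _ => ?_
  rw [filter_fst_eq, Finset.prod_image]
  intro a _ b _ h; simpa using h

/-- The per-scope factor of the planted Fourier weight. -/
def gFun (n k : ℕ) (p : ℝ) (ηP : (Fin k → Bool) → ℝ) (β : Finset (Scope n k))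
    (γ : Finset (Scope n k × Fin k)) (x : Assign n) (S : Scope n k)
    (v : Bool) (c : Fin k → Bool) : ℝ :=
  (if v then p * (ηP (fun j => xor (c j) (x (S.1 j))) * (1 / 2) ^ k)
    else (1 - p) * (1 / 2) ^ k)
    * (if S ∈ β then phiY p v else 1) * ∏ j ∈ fibJ γ S, sgn (c j)

/-- The per-scope coefficient. -/
def coefS (n k : ℕ) (p : ℝ) (ηP : (Fin k → Bool) → ℝ) (β : Finset (Scope n k))
    (γ : Finset (Scope n k × Fin k)) (S : Scope n k) : ℝ :=
  if S ∈ scopesOf n k γ then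
    p * (if S ∈ β then phiY p true else 1) * etaHat k ηP (fibJ γ S)
  else if S ∈ β then 0 else 1
lemma p_mul_sqrt_div {p : ℝ} (hp0 : 0 < p) (hp1 : p < 1) :
    p * Real.sqrt ((1 - p) / p) = Real.sqrt (p * (1 - p)) := by
  have hq0 : (0:ℝ) < 1 - p := by linarith
  rw [Real.sqrt_div hq0.le, Real.sqrt_mul hp0.le, mul_div_assoc',
    div_eq_iff (by positivity : Real.sqrt p ≠ 0), mul_comm (Real.sqrt p) _,
    mul_assoc, Real.mul_self_sqrt hp0.le]
  ring

lemma q_mul_sqrt_div {p : ℝ} (hp0 : 0 < p) (hp1 : p < 1) :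
    (1 - p) * Real.sqrt (p / (1 - p)) = Real.sqrt (p * (1 - p)) := by
  have hq0 : (0:ℝ) < 1 - p := by linarith
  rw [Real.sqrt_div hp0.le, Real.sqrt_mul hp0.le, mul_div_assoc',
    div_eq_iff (by positivity : Real.sqrt (1-p) ≠ 0), mul_assoc,
    Real.mul_self_sqrt hq0.le]
  ring

lemma p_phi_cancel {p : ℝ} (hp0 : 0 < p) (hp1 : p < 1) :
    p * phiY p true + (1 - p) * phiY p false = 0 := by
  have e1 : phiY p true = -Real.sqrt ((1-p)/p) := by simp [phiY]
  have e2 : phiY p false = Real.sqrt (p/(1-p)) := by simp [phiY]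
  rw [e1, e2, mul_neg, p_mul_sqrt_div hp0 hp1, q_mul_sqrt_div hp0 hp1]
  ring

lemma gSum_eq {β : Finset (Scope n k)} {γ : Finset (Scope n k × Fin k)}
    (hp0 : 0 < p) (hp1 : p < 1)
    (h1 : ((1 / 2 : ℝ) ^ k * ∑ z : Fin k → Bool, ηP z) = 1)
    (x : Assign n) (S : Scope n k) :
    (∑ v : Bool, ∑ c : Fin k → Bool, gFun n k p ηP β γ x S v c)
      = coefS n k p ηP β γ S * ∏ j ∈ fibJ γ S, sgn (x (S.1 j)) := by
  have hhalf : ((1:ℝ)/2) ^ k * 2 ^ k = 1 := by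
    rw [div_pow, one_pow, div_mul_cancel₀]; positivity
  have hinv : Function.Involutive
      (fun c : Fin k → Bool => fun j => xor (c j) (x (S.1 j))) := by
    intro c; funext j; simp
  have htrue : (∑ c : Fin k → Bool, gFun n k p ηP β γ x S true c)
      = p * (if S ∈ β then phiY p true else 1) * etaHat k ηP (fibJ γ S)
          * ∏ j ∈ fibJ γ S, sgn (x (S.1 j)) := by
    rw [← Function.Bijective.sum_comp hinv.bijective
      (fun c => gFun n k p ηP β γ x S true c)]
    simp only [gFun, if_true]
    have key : ∀ c : Fin k → Bool,
        p * (ηP (fun j => xor (xor (c j) (x (S.1 j))) (x (S.1 j))) * (1/2)^k)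
          * (if S ∈ β then phiY p true else 1)
          * ∏ j ∈ fibJ γ S, sgn (xor (c j) (x (S.1 j)))
        = (p * (if S ∈ β then phiY p true else 1) * ((1/2)^k * (ηP c
            * ∏ j ∈ fibJ γ S, sgn (c j)))) * ∏ j ∈ fibJ γ S, sgn (x (S.1 j)) := by
      intro c
      have hx : (fun j => xor (xor (c j) (x (S.1 j))) (x (S.1 j))) = c := by
        funext j; simp
      rw [hx]
      simp_rw [sgn_xor, Finset.prod_mul_distrib]
      ring
    rw [Finset.sum_congr rfl fun c _ => key c]
    rw [show (∑ c : Fin k → Bool, (p * (if S ∈ β then phiY p true else 1) * ((1/2)^k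
        * (ηP c * ∏ j ∈ fibJ γ S, sgn (c j)))) * ∏ j ∈ fibJ γ S, sgn (x (S.1 j)))
      = (∑ c : Fin k → Bool, p * (if S ∈ β then phiY p true else 1) * ((1/2)^k
        * (ηP c * ∏ j ∈ fibJ γ S, sgn (c j)))) * ∏ j ∈ fibJ γ S, sgn (x (S.1 j))
      from (Finset.sum_mul _ _ _).symm]
    congr 1
    rw [etaHat, show (∑ c : Fin k → Bool, p * (if S ∈ β then phiY p true else 1)
        * ((1/2)^k * (ηP c * ∏ j ∈ fibJ γ S, sgn (c j))))
      = p * (if S ∈ β then phiY p true else 1) * ((1/2)^k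
        * (∑ c : Fin k → Bool, ηP c * ∏ j ∈ fibJ γ S, sgn (c j))) from by
        rw [Finset.mul_sum, Finset.mul_sum]]
  have hfalse : (∑ c : Fin k → Bool, gFun n k p ηP β γ x S false c)
      = (1 - p) * (if S ∈ β then phiY p false else 1)
          * (if (fibJ γ S).Nonempty then 0 else 1) := by
    simp only [gFun, Bool.false_eq_true, if_false]
    rw [show (∑ c : Fin k → Bool, ((1-p) * (1/2)^k * if S ∈ β then phiY p false else 1)
        * ∏ j ∈ fibJ γ S, sgn (c j))
      = ((1-p) * (1/2)^k * if S ∈ β then phiY p false else 1)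
        * ∑ c : Fin k → Bool, ∏ j ∈ fibJ γ S, sgn (c j)
      from (Finset.mul_sum _ _ _).symm]
    by_cases hne : (fibJ γ S).Nonempty
    · rw [if_pos hne, sum_prod_sgn _ hne]; ring
    · rw [if_neg hne, Finset.not_nonempty_iff_eq_empty.mp hne]
      simp only [Finset.prod_empty]
      rw [Finset.sum_const, Finset.card_univ, nsmul_eq_mul, mul_one]
      have hcard : ((Fintype.card (Fin k → Bool) : ℝ)) = 2 ^ k := by
        simp [Fintype.card_fun]
      rw [hcard, mul_one]
      linear_combination ((1 - p) * (if S ∈ β then phiY p false else 1)) * hhalf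
  rw [Fintype.sum_bool, htrue, hfalse, coefS]
  by_cases hS : S ∈ scopesOf n k γ
  · rw [if_pos hS, if_pos (mem_scopesOf_iff.mp hS)]
    ring
  · rw [if_neg hS]
    have hempty : fibJ γ S = ∅ :=
      Finset.not_nonempty_iff_eq_empty.mp (fun h => hS (mem_scopesOf_iff.mpr h))
    rw [hempty]
    simp only [Finset.prod_empty, Finset.not_nonempty_empty, if_false, mul_one]
    rw [etaHat_empty h1, mul_one]
    by_cases hb : S ∈ β
    · rw [if_pos hb, if_pos hb, if_pos hb]
      rw [p_phi_cancel hp0 hp1]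
    · rw [if_neg hb, if_neg hb, if_neg hb]
      ring
lemma muHat_factored (α : Finset (Fin n)) (β : Finset (Scope n k))
    (γ : Finset (Scope n k × Fin k)) :
    muHat n k p ηP α β γ = (1/2:ℝ)^n * ∑ x : Assign n, chiF n α x *
      ∏ S : Scope n k, (∑ v : Bool, ∑ c : Fin k → Bool, gFun n k p ηP β γ x S v c) := by
  rw [muHat, Fintype.sum_prod_type, Finset.mul_sum]
  refine Finset.sum_congr rfl fun x _ => ?_
  rw [Fintype.sum_prod_type]
  have key : ∀ (y : Scope n k → Bool) (b : Scope n k → Fin k → Bool),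
      plantedMass n k p ηP (x, (y, b)) * chiF n α x * phiF n k p β y * psiF n k γ b
      = (1/2:ℝ)^n * (chiF n α x * ∏ S : Scope n k, gFun n k p ηP β γ x S (y S) (b S)) := by
    intro y b
    have hphi : phiF n k p β y = ∏ S : Scope n k, (if S ∈ β then phiY p (y S) else 1) := by
      rw [Finset.prod_ite_mem, Finset.univ_inter, phiF]
    have hpsi : psiF n k γ b = ∏ S : Scope n k, ∏ j ∈ fibJ γ S, sgn (b S j) :=
      prod_gamma γ (fun e => sgn (b e.1 e.2))
    rw [plantedMass, hphi, hpsi]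
    have hlit : ∀ S : Scope n k, ηP (litBits n k x (y, b) S)
        = ηP (fun j => xor (b S j) (x (S.1 j))) := fun S => rfl
    simp only [gFun, Finset.prod_mul_distrib]
    simp_rw [hlit]
    ring
  rw [Finset.sum_congr rfl fun y _ =>
    Finset.sum_congr rfl fun b _ => key y b]
  have step1 : ∀ y : Scope n k → Bool,
      (∑ b : Scope n k → Fin k → Bool,
        (1/2:ℝ)^n * (chiF n α x * ∏ S : Scope n k, gFun n k p ηP β γ x S (y S) (b S)))
      = (1/2:ℝ)^n * (chiF n α x * ∏ S : Scope n k,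
          ∑ c : Fin k → Bool, gFun n k p ηP β γ x S (y S) c) := by
    intro y
    rw [Fintype.prod_sum fun S c => gFun n k p ηP β γ x S (y S) c,
      ← Finset.mul_sum, ← Finset.mul_sum]
  rw [Finset.sum_congr rfl fun y _ => step1 y,
    Fintype.prod_sum fun S v => ∑ c : Fin k → Bool, gFun n k p ηP β γ x S v c,
    ← Finset.mul_sum, ← Finset.mul_sum]

lemma sum_x_eq (α : Finset (Fin n)) (γ : Finset (Scope n k × Fin k)) :
    ((1/2:ℝ)^n * ∑ x : Assign n, chiF n α x *
        ∏ S : Scope n k, ∏ j ∈ fibJ γ S, sgn (x (S.1 j)))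
      = if derives n k γ α then 1 else 0 := by
  have h2 : ∀ x : Assign n, chiF n α x *
      ∏ S : Scope n k, ∏ j ∈ fibJ γ S, sgn (x (S.1 j))
      = ∏ i : Fin n, ((if i ∈ α then sgn (x i) else 1)
          * sgn (x i) ^ (γ.filter fun e => e.1.1 e.2 = i).card) := by
    intro x
    rw [← prod_gamma γ (fun e => sgn (x (e.1.1 e.2))),
      ← Finset.prod_fiberwise γ (fun e => e.1.1 e.2) (fun e => sgn (x (e.1.1 e.2)))]
    have hchi : chiF n α x = ∏ i : Fin n, (if i ∈ α then sgn (x i) else 1) := by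
      rw [Finset.prod_ite_mem, Finset.univ_inter, chiF]
    have hfib : ∀ i : Fin n, (∏ e ∈ γ.filter (fun e => e.1.1 e.2 = i),
        sgn (x (e.1.1 e.2))) = sgn (x i) ^ (γ.filter fun e => e.1.1 e.2 = i).card := by
      intro i
      rw [Finset.prod_congr rfl (fun e he => by
        rw [(Finset.mem_filter.mp he).2] : ∀ e ∈ γ.filter (fun e => e.1.1 e.2 = i),
          sgn (x (e.1.1 e.2)) = sgn (x i)), Finset.prod_const]
    rw [hchi, Finset.prod_congr rfl fun i _ => hfib i, ← Finset.prod_mul_distrib]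
  rw [Finset.sum_congr rfl fun x _ => h2 x,
    sum_fun_prod fun i b => (if i ∈ α then sgn b else 1)
      * sgn b ^ (γ.filter fun e => e.1.1 e.2 = i).card]
  have h3 : ∀ i : Fin n,
      ((if i ∈ α then sgn false else 1) * sgn false ^ (γ.filter fun e => e.1.1 e.2 = i).card
        + (if i ∈ α then sgn true else 1) * sgn true ^ (γ.filter fun e => e.1.1 e.2 = i).card)
      = if (i ∈ α ↔ Odd (γ.filter fun e => e.1.1 e.2 = i).card) then 2 else 0 := by
    intro i
    rcases Nat.even_or_odd (γ.filter fun e => e.1.1 e.2 = i).card with h | h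
    · by_cases hi : i ∈ α <;>
        simp [hi, sgn, h.neg_one_pow, Nat.not_odd_iff_even.mpr h, h] <;> norm_num
    · by_cases hi : i ∈ α <;>
        simp [hi, sgn, h.neg_one_pow, h] <;> norm_num
  rw [Finset.prod_congr rfl fun i _ => h3 i]
  by_cases hd : derives n k γ α
  · rw [if_pos hd]
    rw [Finset.prod_congr rfl fun i _ => if_pos (hd i), Finset.prod_const,
      Finset.card_univ, Fintype.card_fin]
    rw [div_pow, one_pow, div_mul_cancel₀]
    positivity
  · rw [if_neg hd]
    rw [derives] at hd
    obtain ⟨i, hi⟩ := not_forall.mp hd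
    have hz : (∏ i : Fin n, if (i ∈ α ↔ Odd (γ.filter fun e => e.1.1 e.2 = i).card)
        then (2:ℝ) else 0) = 0 :=
      Finset.prod_eq_zero (Finset.mem_univ i) (if_neg hi)
    rw [hz, mul_zero]

lemma muHat_eq {P : (Fin k → Bool) → Bool} (hp0 : 0 < p) (hp1 : p < 1)
    (hP : SupportsUniform k t P ηP)
    (α : Finset (Fin n)) (β : Finset (Scope n k)) (γ : Finset (Scope n k × Fin k)) :
    muHat n k p ηP α β γ
      = (if derives n k γ α then 1 else 0) * ∏ S : Scope n k, coefS n k p ηP β γ S := by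
  rw [muHat_factored α β γ,
    Finset.sum_congr rfl fun x _ => by
      rw [Finset.prod_congr rfl fun S _ => gSum_eq hp0 hp1 hP.2.1 x S,
        Finset.prod_mul_distrib]]
  have : ∀ x : Assign n, chiF n α x * ((∏ S : Scope n k, coefS n k p ηP β γ S)
      * ∏ S : Scope n k, ∏ j ∈ fibJ γ S, sgn (x (S.1 j)))
      = (∏ S : Scope n k, coefS n k p ηP β γ S)
        * (chiF n α x * ∏ S : Scope n k, ∏ j ∈ fibJ γ S, sgn (x (S.1 j))) := fun x => by
    ring
  rw [Finset.sum_congr rfl fun x _ => this x, ← Finset.mul_sum,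
    show ((1/2:ℝ)^n * ((∏ S : Scope n k, coefS n k p ηP β γ S)
        * ∑ x : Assign n, chiF n α x * ∏ S : Scope n k, ∏ j ∈ fibJ γ S, sgn (x (S.1 j))))
      = (∏ S : Scope n k, coefS n k p ηP β γ S)
        * ((1/2:ℝ)^n * ∑ x : Assign n, chiF n α x
            * ∏ S : Scope n k, ∏ j ∈ fibJ γ S, sgn (x (S.1 j))) from by ring,
    sum_x_eq α γ, mul_comm]
end Aux
end RandomCSP
namespace RandomCSP

/-- bounds on the Fourier coefficients of the planted density. -/
theorem muHat_bounds (n k t : ℕ) (hk : 2 ≤ k) (ht : 3 ≤ t) (htk : t ≤ k) (hn : k ≤ n)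
    (P : (Fin k → Bool) → Bool) (ηP : (Fin k → Bool) → ℝ)
    (hP : SupportsUniform k t P ηP)
    (p : ℝ) (hp0 : 0 < p) (hp1 : p < 1)
    (α : Finset (Fin n)) (β : Finset (Scope n k)) (γ : Finset (Scope n k × Fin k)) :
    (derives n k γ α ∧ arityGE n k γ t ∧ β ⊆ scopesOf n k γ →
      |muHat n k p ηP α β γ|
        ≤ Real.sqrt (p * (1 - p)) ^ (scopesOf n k γ ∩ β).card
            * p ^ (scopesOf n k γ \ β).card) ∧
    (¬(derives n k γ α ∧ arityGE n k γ t ∧ β ⊆ scopesOf n k γ) →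
      muHat n k p ηP α β γ = 0) := by
  have hq0 : (0:ℝ) < 1 - p := by linarith
  rw [muHat_eq hp0 hp1 hP α β γ]
  constructor
  · rintro ⟨hd, har, hsub⟩
    rw [if_pos hd, one_mul, Finset.abs_prod]
    have houter : (∏ S ∈ scopesOf n k γ, |coefS n k p ηP β γ S|)
        = ∏ S : Scope n k, |coefS n k p ηP β γ S| := by
      refine Finset.prod_subset (Finset.subset_univ _) fun S _ hS => ?_
      rw [coefS, if_neg hS, if_neg (fun hb => hS (hsub hb))]
      simp
    rw [← houter, ← Finset.prod_inter_mul_prod_diff (scopesOf n k γ) β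
      (fun S => |coefS n k p ηP β γ S|)]
    have hb1 : ∀ S ∈ scopesOf n k γ ∩ β, |coefS n k p ηP β γ S|
        ≤ Real.sqrt (p * (1 - p)) := by
      intro S hS
      obtain ⟨hSg, hSb⟩ := Finset.mem_inter.mp hS
      rw [coefS, if_pos hSg, if_pos hSb]
      have hphi : |phiY p true| = Real.sqrt ((1-p)/p) := by
        simp [phiY, abs_of_nonneg (Real.sqrt_nonneg _)]
      rw [abs_mul, abs_mul, abs_of_pos hp0, hphi]
      calc p * Real.sqrt ((1-p)/p) * |etaHat k ηP (fibJ γ S)|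
          ≤ p * Real.sqrt ((1-p)/p) * 1 :=
            mul_le_mul_of_nonneg_left (abs_etaHat_le hP.1 hP.2.1 _) (by positivity)
        _ = Real.sqrt (p * (1 - p)) := by rw [mul_one, p_mul_sqrt_div hp0 hp1]
    have hb2 : ∀ S ∈ scopesOf n k γ \ β, |coefS n k p ηP β γ S| ≤ p := by
      intro S hS
      obtain ⟨hSg, hSb⟩ := Finset.mem_sdiff.mp hS
      rw [coefS, if_pos hSg, if_neg hSb, mul_one, abs_mul, abs_of_pos hp0]
      calc p * |etaHat k ηP (fibJ γ S)| ≤ p * 1 :=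
            mul_le_mul_of_nonneg_left (abs_etaHat_le hP.1 hP.2.1 _) hp0.le
        _ = p := mul_one p
    calc (∏ S ∈ scopesOf n k γ ∩ β, |coefS n k p ηP β γ S|)
          * ∏ S ∈ scopesOf n k γ \ β, |coefS n k p ηP β γ S|
        ≤ (∏ _S ∈ scopesOf n k γ ∩ β, Real.sqrt (p * (1 - p)))
          * ∏ _S ∈ scopesOf n k γ \ β, p :=
          mul_le_mul (Finset.prod_le_prod (fun S _ => abs_nonneg _) hb1)
            (Finset.prod_le_prod (fun S _ => abs_nonneg _) hb2)
            (Finset.prod_nonneg fun S _ => abs_nonneg _)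
            (Finset.prod_nonneg fun S _ => Real.sqrt_nonneg _)
      _ = Real.sqrt (p * (1 - p)) ^ (scopesOf n k γ ∩ β).card
          * p ^ (scopesOf n k γ \ β).card := by
          rw [Finset.prod_const, Finset.prod_const]
  · intro h
    by_cases hd : derives n k γ α
    · by_cases har : arityGE n k γ t
      · have hsub : ¬ β ⊆ scopesOf n k γ := fun hs => h ⟨hd, har, hs⟩
        obtain ⟨S, hSb, hSg⟩ := Finset.not_subset.mp hsub
        have : coefS n k p ηP β γ S = 0 := by
          rw [coefS, if_neg hSg, if_pos hSb]
        rw [Finset.prod_eq_zero (Finset.mem_univ S) this, mul_zero]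
      · rw [arityGE] at har
        push_neg at har
        obtain ⟨S, hSg, hcard⟩ := har
        have hfib : (fibJ γ S).card ≤ t - 1 := by
          rw [← card_filter_fst]
          omega
        have hz : etaHat k ηP (fibJ γ S) = 0 :=
          etaHat_eq_zero hP htk _ (mem_scopesOf_iff.mp hSg) hfib
        have : coefS n k p ηP β γ S = 0 := by
          rw [coefS, if_pos hSg, hz, mul_zero]
        rw [Finset.prod_eq_zero (Finset.mem_univ S) this, mul_zero]
    · rw [if_neg hd, zero_mul]

end RandomCSP
end

section
/- There exist constants c > 0 and C > 0 depending only on k and t such that for all n, all α ⊆ [n], and all l ≤ cn/k: the number N_l(α) of pairs (β,γ) with γ ⊢ α, r(γ) ≥ t, β ⊆ γ̄ and |γ̄| = l satisfies N_l(α) ≤ C^l · n^{kl - (tl + |α|)/2} · l^{(tl + |α|)/2 - l}. In particular this bounds the number of Fourier coefficients μ̂*(α,β,γ) ≠ 0 with |γ̄| = l. -/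
open Finset Matrix
open scoped BigOperators Classical

open Finset
open scoped Classical
noncomputable section
namespace AuxCount

def slotOrd (l k : ℕ) (s : Fin l × Fin k) : ℕ := (finProdFinEquiv s : ℕ)

lemma slotOrd_injective (l k : ℕ) : Function.Injective (slotOrd l k) := by
  intro a b h
  exact finProdFinEquiv.injective (Fin.val_injective h)

variable {n l k : ℕ}

def freshP (α : Finset (Fin n)) (x : Fin l × Fin k → Fin n) (s : Fin l × Fin k) : Prop :=
  x s ∉ α ∧ ¬ ∃ s', slotOrd l k s' < slotOrd l k s ∧ x s' = x s

def encA (α : Finset (Fin n)) (x : Fin l × Fin k → Fin n) (s : Fin l × Fin k) :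
    Fin n ⊕ ((Fin l × Fin k) ⊕ {i : Fin n // i ∈ α}) :=
  if h : x s ∈ α then Sum.inr (Sum.inr ⟨x s, h⟩)
  else if h2 : ∃ s', slotOrd l k s' < slotOrd l k s ∧ x s' = x s then Sum.inr (Sum.inl h2.choose)
  else Sum.inl (x s)

lemma encA_isLeft (α : Finset (Fin n)) (x : Fin l × Fin k → Fin n) (s : Fin l × Fin k) :
    (encA α x s).isLeft = true ↔ freshP α x s := by
  unfold encA freshP
  split_ifs with h1 h2
  · simp [h1]
  · simp [h1, h2]
  · simp [h1, h2]

lemma encA_injective (α : Finset (Fin n)) :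
    Function.Injective (encA (l := l) (k := k) α) := by
  intro x₁ x₂ h
  have H : ∀ N (s : Fin l × Fin k), slotOrd l k s < N → x₁ s = x₂ s := by
    intro N
    induction N with
    | zero => intro s hs; omega
    | succ N ih =>
      intro s hs
      have he := congrFun h s
      unfold encA at he
      by_cases h1 : x₁ s ∈ α
      · rw [dif_pos h1] at he
        by_cases h3 : x₂ s ∈ α
        · rw [dif_pos h3] at he
          simpa using he
        · rw [dif_neg h3] at he
          by_cases h4 : ∃ s', slotOrd l k s' < slotOrd l k s ∧ x₂ s' = x₂ s
          · rw [dif_pos h4] at he; simp at he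
          · rw [dif_neg h4] at he; simp at he
      · rw [dif_neg h1] at he
        by_cases h2 : ∃ s', slotOrd l k s' < slotOrd l k s ∧ x₁ s' = x₁ s
        · rw [dif_pos h2] at he
          by_cases h3 : x₂ s ∈ α
          · rw [dif_pos h3] at he; simp at he
          · rw [dif_neg h3] at he
            by_cases h4 : ∃ s', slotOrd l k s' < slotOrd l k s ∧ x₂ s' = x₂ s
            · rw [dif_pos h4] at he
              simp only [Sum.inr.injEq, Sum.inl.injEq] at he
              obtain ⟨hlt1, hv1⟩ := h2.choose_spec
              obtain ⟨hlt2, hv2⟩ := h4.choose_spec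
              have hih : x₁ h2.choose = x₂ h2.choose := ih _ (by omega)
              rw [← hv1, hih, he, hv2]
            · rw [dif_neg h4] at he; simp at he
        · rw [dif_neg h2] at he
          by_cases h3 : x₂ s ∈ α
          · rw [dif_pos h3] at he; simp at he
          · rw [dif_neg h3] at he
            by_cases h4 : ∃ s', slotOrd l k s' < slotOrd l k s ∧ x₂ s' = x₂ s
            · rw [dif_pos h4] at he; simp at he
            · rw [dif_neg h4] at he
              simpa using he
  funext s
  exact H (slotOrd l k s + 1) s (Nat.lt_succ_self _)

lemma fresh_card_bound (t : ℕ) (α : Finset (Fin n)) (c : Fin n → ℕ) (x : Fin l × Fin k → Fin n)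
    (hodd : ∀ i, i ∈ α ↔ Odd (c i))
    (hM : t * l ≤ ∑ i, c i)
    (hcnt : ∀ i, c i ≤ (univ.filter fun s => x s = i).card) :
    2 * (univ.filter fun s => freshP α x s).card + t * l + α.card ≤ 2 * (l * k) := by
  classical
  set FR := (univ.filter fun s => freshP α x s) with hFR
  set NF := (univ.filter fun s => ¬ freshP α x s) with hNF
  have hpart : FR.card + NF.card = l * k := by
    rw [hFR, hNF, Finset.card_filter_add_card_filter_not]
    simp
  -- per-value inequality
  have key : ∀ i : Fin n, c i + (if i ∈ α then 1 else 0) ≤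
      2 * ((NF.filter fun s => x s = i).card) := by
    intro i
    have hcs : ((univ.filter fun s => x s = i).filter fun s => freshP α x s).card
        + ((univ.filter fun s => x s = i).filter fun s => ¬ freshP α x s).card
        = (univ.filter fun s => x s = i).card :=
      Finset.card_filter_add_card_filter_not _
    have hnf_eq : ((univ.filter fun s => x s = i).filter fun s => ¬ freshP α x s)
        = (NF.filter fun s => x s = i) := by
      rw [hNF, Finset.filter_filter, Finset.filter_filter]
      exact Finset.filter_congr (by intro s _; tauto)
    rw [hnf_eq] at hcs
    by_cases hi : i ∈ α
    · have hfr0 : ((univ.filter fun s => x s = i).filter fun s => freshP α x s) = ∅ := by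
        apply Finset.filter_eq_empty_iff.2
        intro s hs hfresh
        rw [Finset.mem_filter] at hs
        exact hfresh.1 (hs.2 ▸ hi)
      have hoddc : Odd (c i) := (hodd i).1 hi
      have h1 : 1 ≤ c i := hoddc.pos
      have := hcnt i
      rw [hfr0, Finset.card_empty] at hcs
      simp only [hi, if_true]
      omega
    · have hfr1 : ((univ.filter fun s => x s = i).filter fun s => freshP α x s).card ≤ 1 := by
        apply Finset.card_le_one.2
        intro s hs s' hs'
        simp only [Finset.mem_filter, Finset.mem_univ, true_and] at hs hs'
        by_contra hne
        have hord : slotOrd l k s ≠ slotOrd l k s' :=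
          fun hh => hne (slotOrd_injective l k hh)
        rcases Nat.lt_or_ge (slotOrd l k s) (slotOrd l k s') with hlt | hge
        · exact hs'.2.2 ⟨s, hlt, by rw [hs.1, hs'.1]⟩
        · exact hs.2.2 ⟨s', by omega, by rw [hs.1, hs'.1]⟩
      have heven : ¬ Odd (c i) := fun ho => hi ((hodd i).2 ho)
      rw [Nat.not_odd_iff_even, Nat.even_iff] at heven
      have := hcnt i
      simp only [hi, if_false]
      omega
  -- sum it up
  have hsum2 : (∑ i, c i) + α.card ≤ 2 * NF.card := by
    have hfib : NF.card = ∑ i : Fin n, (NF.filter fun s => x s = i).card :=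
      Finset.card_eq_sum_card_fiberwise (fun s _ => Finset.mem_univ (x s))
    have hαsum : (∑ i : Fin n, (if i ∈ α then 1 else 0)) = α.card := by
      simp [Finset.sum_ite_mem, Finset.univ_inter]
    calc (∑ i, c i) + α.card = ∑ i : Fin n, (c i + (if i ∈ α then 1 else 0)) := by
          rw [Finset.sum_add_distrib, hαsum]
      _ ≤ ∑ i : Fin n, 2 * ((NF.filter fun s => x s = i).card) := Finset.sum_le_sum (fun i _ => key i)
      _ = 2 * NF.card := by rw [← Finset.mul_sum, ← hfib]
  omega

lemma pow_le_exp_mul_factorial (l : ℕ) : (l : ℝ) ^ l ≤ Real.exp l * l.factorial := by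
  induction l with
  | zero => simp
  | succ m ih =>
    have hstep : ((m + 1 : ℕ) : ℝ) ^ m ≤ Real.exp 1 * (m : ℝ) ^ m := by
      rcases Nat.eq_zero_or_pos m with hm | hm
      · subst hm
        have h1 : (1:ℝ) ≤ Real.exp 1 := by linarith [Real.add_one_le_exp (1:ℝ)]
        simpa using h1
      · have hmpos : (0 : ℝ) < m := by exact_mod_cast hm
        have h1 : ((m + 1 : ℕ) : ℝ) = m * (1 + 1 / m) := by
          push_cast; field_simp
        have h2 : (1 + 1 / (m : ℝ)) ^ m ≤ Real.exp 1 := by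
          have := Real.add_one_le_exp (1 / (m : ℝ))
          have hb : (0 : ℝ) ≤ 1 + 1 / m := by positivity
          calc (1 + 1 / (m : ℝ)) ^ m ≤ (Real.exp (1 / m)) ^ m := by
                apply pow_le_pow_left₀ hb (by linarith)
            _ = Real.exp (1 / m * m) := by rw [← Real.exp_nat_mul]; ring_nf
            _ = Real.exp 1 := by rw [div_mul_cancel₀]; exact ne_of_gt hmpos
        calc ((m + 1 : ℕ) : ℝ) ^ m = (m : ℝ) ^ m * (1 + 1 / m) ^ m := by
              rw [h1, mul_pow]
          _ ≤ (m : ℝ) ^ m * Real.exp 1 := by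
              apply mul_le_mul_of_nonneg_left h2 (by positivity)
          _ = Real.exp 1 * (m : ℝ) ^ m := by ring
    calc ((m + 1 : ℕ) : ℝ) ^ (m + 1) = ((m + 1 : ℕ) : ℝ) * ((m + 1 : ℕ) : ℝ) ^ m := by ring
      _ ≤ ((m + 1 : ℕ) : ℝ) * (Real.exp 1 * (m : ℝ) ^ m) := by
          apply mul_le_mul_of_nonneg_left hstep (by positivity)
      _ ≤ ((m + 1 : ℕ) : ℝ) * (Real.exp 1 * (Real.exp m * m.factorial)) := by
          apply mul_le_mul_of_nonneg_left _ (by positivity)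
          exact mul_le_mul_of_nonneg_left ih (Real.exp_pos 1).le
      _ = Real.exp (m + 1) * ((m + 1) * m.factorial) := by
          rw [Real.exp_add]; push_cast; ring
      _ = Real.exp ((m + 1 : ℕ) : ℝ) * ((m + 1).factorial : ℝ) := by
          rw [Nat.factorial_succ]; push_cast; ring

lemma count_enum {l : ℕ} {σ : Type*} [Fintype σ] [DecidableEq σ] (V : Finset σ) (hV : V.card = l) :
    (univ.filter fun L : Fin l → σ => Function.Injective L ∧ ∀ i, L i ∈ V).card
      = l.factorial := by
  classical
  rw [← Fintype.card_subtype]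
  have e : {L : Fin l → σ // Function.Injective L ∧ ∀ i, L i ∈ V} ≃ (Fin l ↪ {x // x ∈ V}) :=
    { toFun := fun L => ⟨fun i => ⟨L.1 i, L.2.2 i⟩, fun a b h => L.2.1 (congrArg Subtype.val h)⟩
      invFun := fun f => ⟨fun i => (f i).1,
        ⟨fun a b h => f.injective (Subtype.ext h), fun i => (f i).2⟩⟩
      left_inv := fun L => by ext i; rfl
      right_inv := fun f => by ext i; rfl }
  rw [Fintype.card_congr e, Fintype.card_embedding_eq, Fintype.card_fin, Fintype.card_coe, hV,
    Nat.descFactorial_self]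

lemma rpow_shift {nR qR : ℝ} (h1 : 1 ≤ qR) (h2 : qR ≤ nR) (i j : ℕ) (E X : ℝ)
    (hEX : (i : ℝ) + j = E + X) (hiE : (i : ℝ) ≤ E) :
    (nR : ℝ) ^ i * qR ^ j ≤ nR ^ E * qR ^ X := by
  have hq : (0 : ℝ) < qR := lt_of_lt_of_le one_pos h1
  have hn : (0 : ℝ) < nR := lt_of_lt_of_le hq h2
  have hj : (j : ℝ) = X + (E - (i : ℝ)) := by linarith
  have e1 : qR ^ j = qR ^ (X : ℝ) * qR ^ ((E - (i:ℝ)) : ℝ) := by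
    rw [← Real.rpow_natCast qR j, hj, Real.rpow_add hq]
  have e2 : qR ^ ((E - (i:ℝ)) : ℝ) ≤ nR ^ ((E - (i:ℝ)) : ℝ) :=
    Real.rpow_le_rpow hq.le h2 (by linarith)
  calc nR ^ i * qR ^ j = (nR ^ (i:ℝ) * qR ^ ((E - (i:ℝ)) : ℝ)) * qR ^ (X:ℝ) := by
        rw [e1, Real.rpow_natCast]; ring
    _ ≤ (nR ^ (i:ℝ) * nR ^ ((E - (i:ℝ)) : ℝ)) * qR ^ (X:ℝ) := by
        apply mul_le_mul_of_nonneg_right _ (Real.rpow_nonneg hq.le _)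
        exact mul_le_mul_of_nonneg_left e2 (Real.rpow_nonneg hn.le _)
    _ = nR ^ E * qR ^ X := by rw [← Real.rpow_add hn]; ring_nf

lemma fiber_card_le {n l k : ℕ} (hn : 0 < n) (hl : 0 < l) (hk : 0 < k)
    (α : Finset (Fin n)) (A : Finset (Fin l × Fin k)) :
    (univ.filter fun e : Fin l × Fin k → (Fin n ⊕ ((Fin l × Fin k) ⊕ {i : Fin n // i ∈ α})) × Bool =>
        (univ.filter fun s => (e s).1.isLeft) = A).card
      ≤ (n * 2) ^ A.card * ((l * k + α.card) * 2) ^ (l * k - A.card) := by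
  classical
  let R := (Fin l × Fin k) ⊕ {i : Fin n // i ∈ α}
  let D := (Fin n ⊕ R) × Bool
  let getL : Fin n ⊕ R → Fin n := fun d => (d.getLeft?).getD ⟨0, hn⟩
  let getR : Fin n ⊕ R → R := fun d => (d.getRight?).getD (Sum.inl (⟨0, hl⟩, ⟨0, hk⟩))
  let ψ : (Fin l × Fin k → D) → (({s // s ∈ A} → Fin n × Bool) × ({s // s ∈ Aᶜ} → R × Bool)) :=
    fun e => (fun s => (getL (e s.1).1, (e s.1).2), fun s => (getR (e s.1).1, (e s.1).2))
  have hinj : Set.InjOn ψ ((univ.filter fun e : Fin l × Fin k → D =>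
      (univ.filter fun s => (e s).1.isLeft) = A) : Finset _) := by
    intro e he e' he' hψ
    simp only [Finset.coe_filter, Set.mem_setOf_eq, Finset.mem_univ, true_and] at he he'
    funext s
    have hmem : s ∈ A ↔ (e s).1.isLeft := by
      rw [← he]; simp
    have hmem' : s ∈ A ↔ (e' s).1.isLeft := by
      rw [← he']; simp
    by_cases hs : s ∈ A
    · obtain ⟨v, hv⟩ := Sum.isLeft_iff.1 (hmem.1 hs)
      obtain ⟨v', hv'⟩ := Sum.isLeft_iff.1 (hmem'.1 hs)
      have := congrFun (congrArg Prod.fst hψ) ⟨s, hs⟩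
      simp only [ψ, hv, hv'] at this
      simp only [getL, Sum.getLeft?, Option.getD_some, Prod.mk.injEq] at this
      have h1 : e s = (Sum.inl v, (e s).2) := by rw [← hv]
      have h2 : e' s = (Sum.inl v', (e' s).2) := by rw [← hv']
      rw [h1, h2, this.1, this.2]
    · have h1 : (e s).1.isRight := by
        rw [← Sum.not_isLeft]; exact fun hc => hs (hmem.2 hc)
      have h2 : (e' s).1.isRight := by
        rw [← Sum.not_isLeft]; exact fun hc => hs (hmem'.2 hc)
      obtain ⟨r, hr⟩ := Sum.isRight_iff.1 h1
      obtain ⟨r', hr'⟩ := Sum.isRight_iff.1 h2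
      have := congrFun (congrArg Prod.snd hψ) ⟨s, Finset.mem_compl.2 hs⟩
      simp only [ψ, hr, hr'] at this
      simp only [getR, Sum.getRight?, Option.getD_some, Prod.mk.injEq] at this
      have g1 : e s = (Sum.inr r, (e s).2) := by rw [← hr]
      have g2 : e' s = (Sum.inr r', (e' s).2) := by rw [← hr']
      rw [g1, g2, this.1, this.2]
  have hcard := Finset.card_le_card_of_injOn ψ (fun a _ => Finset.mem_univ (ψ a)) hinj
  calc _ ≤ (Finset.univ : Finset (({s // s ∈ A} → Fin n × Bool) × ({s // s ∈ Aᶜ} → R × Bool))).card := hcard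
    _ = (n * 2) ^ A.card * ((l * k + α.card) * 2) ^ (l * k - A.card) := by
        rw [Finset.card_univ, Fintype.card_prod, Fintype.card_fun, Fintype.card_fun]
        congr 1
        · rw [Fintype.card_prod, Fintype.card_fin, Fintype.card_bool, Fintype.card_coe]
        · rw [Fintype.card_prod, Fintype.card_bool, Fintype.card_coe, Finset.card_compl]
          congr 2
          · show Fintype.card ((Fin l × Fin k) ⊕ {i : Fin n // i ∈ α}) = l * k + α.card
            rw [Fintype.card_sum, Fintype.card_prod, Fintype.card_fin, Fintype.card_fin,
              Fintype.card_coe]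
          · simp

set_option maxHeartbeats 2000000 in
lemma T_card_le {n l k t : ℕ} (α : Finset (Fin n)) (hl : 0 < l) (hk : 0 < k) (hn : 0 < n)
    (ha : α.card ≤ l * k) (htk : t ≤ k)
    (hq : (2 * ((l * k : ℕ) + (α.card : ℕ)) : ℝ) ≤ n) :
    ((univ.filter fun e : Fin l × Fin k → (Fin n ⊕ ((Fin l × Fin k) ⊕ {i : Fin n // i ∈ α})) × Bool =>
        2 * (univ.filter fun s => (e s).1.isLeft).card + t * l + α.card ≤ 2 * (l * k)).card : ℝ)
      ≤ (2:ℝ) ^ (l*k) * 2 ^ (l*k) * (4*(k:ℝ)) ^ (l*k)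
          * (n:ℝ) ^ ((k*l:ℝ) - (((t:ℝ)*(l:ℝ)) + (α.card:ℝ))/2)
          * (l:ℝ) ^ ((((t:ℝ)*(l:ℝ)) + (α.card:ℝ))/2) := by
  classical
  set X : ℝ := (((t:ℝ)*(l:ℝ)) + (α.card:ℝ))/2 with hX
  set E : ℝ := (k*l:ℝ) - X with hE
  set T := (univ.filter fun e : Fin l × Fin k → (Fin n ⊕ ((Fin l × Fin k) ⊕ {i : Fin n // i ∈ α})) × Bool =>
        2 * (univ.filter fun s => (e s).1.isLeft).card + t * l + α.card ≤ 2 * (l * k)) with hT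
  set P := ((univ : Finset (Finset (Fin l × Fin k))).filter
      fun A => 2 * A.card + t * l + α.card ≤ 2 * (l * k)) with hP
  have hfib : T.card = ∑ A ∈ P, (T.filter fun e => (univ.filter fun s => (e s).1.isLeft) = A).card := by
    apply Finset.card_eq_sum_card_fiberwise
    intro e he
    rw [Finset.mem_coe, hT, Finset.mem_filter] at he
    rw [Finset.mem_coe, hP, Finset.mem_filter]
    exact ⟨Finset.mem_univ _, he.2⟩
  have hterm : ∀ A ∈ P,
      ((T.filter fun e => (univ.filter fun s => (e s).1.isLeft) = A).card : ℝ)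
        ≤ (2:ℝ) ^ (l*k) * (4*(k:ℝ)) ^ (l*k) * (n:ℝ) ^ E * (l:ℝ) ^ X := by
    intro A hA
    rw [hP, Finset.mem_filter] at hA
    have hAle : A.card ≤ l * k := by
      calc A.card ≤ (univ : Finset (Fin l × Fin k)).card := Finset.card_le_card (Finset.subset_univ A)
        _ = l * k := by simp
    have h1 : (T.filter fun e => (univ.filter fun s => (e s).1.isLeft) = A).card
        ≤ (n * 2) ^ A.card * ((l * k + α.card) * 2) ^ (l * k - A.card) := by
      refine le_trans (Finset.card_le_card ?_) (fiber_card_le hn hl hk α A)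
      rw [hT, Finset.filter_filter]
      intro e he
      simp only [Finset.mem_filter] at he ⊢
      exact ⟨he.1, he.2.2⟩
    set i := A.card with hi
    set j := l * k - i with hj
    clear_value i
    clear_value j
    have hij : i + j = l * k := by rw [hj]; exact Nat.add_sub_cancel' hAle
    have hq1 : (1:ℝ) ≤ ((l*k:ℕ):ℝ) + (α.card:ℕ) := by
      have : 1 ≤ l * k := Nat.one_le_iff_ne_zero.2 (by positivity)
      push_cast
      have : (1:ℝ) ≤ (l*k:ℕ) := by exact_mod_cast this
      push_cast at this
      linarith [Nat.cast_nonneg (α := ℝ) α.card]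
    have hq2 : ((l*k:ℕ):ℝ) + (α.card:ℕ) ≤ (n:ℝ) := by
      push_cast at hq ⊢
      have h0 : (0:ℝ) ≤ (l:ℝ)*(k:ℝ) + (α.card:ℝ) := by positivity
      linarith
    have hEX : (i : ℝ) + (j:ℝ) = E + X := by
      rw [hE]
      have : ((i + j : ℕ) : ℝ) = ((l*k : ℕ):ℝ) := by exact_mod_cast congrArg (Nat.cast (R := ℝ)) hij
      push_cast at this ⊢
      linarith
    have hiE : (i : ℝ) ≤ E := by
      rw [hE, hX]
      have := hA.2
      have hcast : 2 * (i:ℝ) + (t:ℝ)*(l:ℝ) + (α.card:ℝ) ≤ 2 * ((l:ℝ) * (k:ℝ)) := by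
        exact_mod_cast this
      push_cast
      linarith
    calc ((T.filter fun e => (univ.filter fun s => (e s).1.isLeft) = A).card : ℝ)
        ≤ (((n * 2) ^ i * ((l * k + α.card) * 2) ^ j : ℕ) : ℝ) := by exact_mod_cast h1
      _ = (((n:ℝ) * 2) ^ i * (((((l*k:ℕ):ℝ)) + ((α.card:ℕ):ℝ)) * 2) ^ j) := by push_cast; ring
      _ = (2:ℝ)^(i+j) * ((n:ℝ)^i * (((l*k:ℕ):ℝ) + (α.card:ℕ))^j) := by
          rw [mul_pow, mul_pow, pow_add]; ring
      _ ≤ (2:ℝ)^(l*k) * ((n:ℝ)^E * (((l*k:ℕ):ℝ) + (α.card:ℕ))^X) := by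
          rw [hij]
          apply mul_le_mul_of_nonneg_left _ (by positivity)
          exact rpow_shift hq1 hq2 i j E X hEX hiE
      _ ≤ (2:ℝ)^(l*k) * ((n:ℝ)^E * ((4*(k:ℝ)) ^ (l*k) * (l:ℝ)^X)) := by
          apply mul_le_mul_of_nonneg_left _ (by positivity)
          apply mul_le_mul_of_nonneg_left _ (Real.rpow_nonneg (Nat.cast_nonneg n) E)
          have hXnn : 0 ≤ X := by rw [hX]; positivity
          have hb1 : (((l*k:ℕ):ℝ) + (α.card:ℕ)) ≤ (4*(k:ℝ)) * (l:ℝ) := by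
            have : (α.card : ℝ) ≤ ((l*k:ℕ):ℝ) := by exact_mod_cast ha
            push_cast at this ⊢
            nlinarith [Nat.cast_nonneg (α := ℝ) l, Nat.cast_nonneg (α := ℝ) k]
          calc (((l*k:ℕ):ℝ) + (α.card:ℕ))^X ≤ ((4*(k:ℝ)) * (l:ℝ))^X := by
                apply Real.rpow_le_rpow (by positivity) hb1 hXnn
            _ = (4*(k:ℝ))^X * (l:ℝ)^X := Real.mul_rpow (by positivity) (Nat.cast_nonneg l)
            _ ≤ (4*(k:ℝ))^((l*k : ℕ):ℝ) * (l:ℝ)^X := by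
                apply mul_le_mul_of_nonneg_right _ (Real.rpow_nonneg (Nat.cast_nonneg l) X)
                apply Real.rpow_le_rpow_of_exponent_le
                · have : (1:ℝ) ≤ (k:ℝ) := by exact_mod_cast hk
                  linarith
                · rw [hX]
                  have h1 : (t:ℝ) ≤ (k:ℝ) := by exact_mod_cast htk
                  have h2 : (α.card : ℝ) ≤ ((l*k:ℕ):ℝ) := by exact_mod_cast ha
                  push_cast at h2 ⊢
                  nlinarith [Nat.cast_nonneg (α := ℝ) l, Nat.cast_nonneg (α := ℝ) t,
                    Nat.cast_nonneg (α := ℝ) k]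
            _ = (4*(k:ℝ))^(l*k) * (l:ℝ)^X := by rw [Real.rpow_natCast]
      _ = (2:ℝ) ^ (l*k) * (4*(k:ℝ)) ^ (l*k) * (n:ℝ) ^ E * (l:ℝ) ^ X := by ring
  have hPcard : (P.card : ℝ) ≤ (2:ℝ)^(l*k) := by
    have : P.card ≤ 2^(l*k) := by
      calc P.card ≤ (univ : Finset (Finset (Fin l × Fin k))).card := Finset.card_le_card (Finset.filter_subset _ _)
        _ = 2^(l*k) := by simp [Fintype.card_finset]
    exact_mod_cast this
  calc (T.card : ℝ) = ∑ A ∈ P, ((T.filter fun e => (univ.filter fun s => (e s).1.isLeft) = A).card : ℝ) := by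
        rw [hfib]; push_cast; ring
    _ ≤ ∑ A ∈ P, ((2:ℝ) ^ (l*k) * (4*(k:ℝ)) ^ (l*k) * (n:ℝ) ^ E * (l:ℝ) ^ X) :=
        Finset.sum_le_sum hterm
    _ = (P.card : ℝ) * ((2:ℝ) ^ (l*k) * (4*(k:ℝ)) ^ (l*k) * (n:ℝ) ^ E * (l:ℝ) ^ X) := by
        rw [Finset.sum_const, nsmul_eq_mul]
    _ ≤ (2:ℝ)^(l*k) * ((2:ℝ) ^ (l*k) * (4*(k:ℝ)) ^ (l*k) * (n:ℝ) ^ E * (l:ℝ) ^ X) := by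
        apply mul_le_mul_of_nonneg_right hPcard (by positivity)
    _ = (2:ℝ) ^ (l*k) * 2 ^ (l*k) * (4*(k:ℝ)) ^ (l*k) * (n:ℝ) ^ E * (l:ℝ) ^ X := by ring

end AuxCount


namespace RandomCSP

open AuxCount

variable {n k t l : ℕ}

lemma mem_scopesOf_of_mem {γ : Finset (Scope n k × Fin k)} {e : Scope n k × Fin k}
    (he : e ∈ γ) : e.1 ∈ scopesOf n k γ :=
  Finset.mem_image.2 ⟨e, he, rfl⟩

lemma card_sum_fibers (γ : Finset (Scope n k × Fin k)) :
    γ.card = ∑ i : Fin n, (γ.filter fun e => e.1.1 e.2 = i).card :=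
  Finset.card_eq_sum_card_fiberwise (fun e _ => Finset.mem_univ _)

lemma alpha_card_le {γ : Finset (Scope n k × Fin k)} {α : Finset (Fin n)}
    (hder : derives n k γ α) : α.card ≤ γ.card := by
  calc α.card = ∑ _i ∈ α, 1 := by simp
    _ ≤ ∑ i ∈ α, (γ.filter fun e => e.1.1 e.2 = i).card :=
        Finset.sum_le_sum (fun i hi => ((hder i).1 hi).pos)
    _ ≤ ∑ i : Fin n, (γ.filter fun e => e.1.1 e.2 = i).card :=
        Finset.sum_le_sum_of_subset (Finset.subset_univ α)
    _ = γ.card := (card_sum_fibers γ).symm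

lemma tl_le_card {γ : Finset (Scope n k × Fin k)}
    (har : arityGE n k γ t) (hcard : (scopesOf n k γ).card = l) : t * l ≤ γ.card := by
  have h : γ.card = ∑ S ∈ scopesOf n k γ, (γ.filter fun e => e.1 = S).card :=
    Finset.card_eq_sum_card_fiberwise (fun e he => mem_scopesOf_of_mem he)
  calc t * l = ∑ _S ∈ scopesOf n k γ, t := by
        rw [Finset.sum_const, hcard, smul_eq_mul, mul_comm]
    _ ≤ ∑ S ∈ scopesOf n k γ, (γ.filter fun e => e.1 = S).card :=
        Finset.sum_le_sum har
    _ = γ.card := h.symm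

lemma gamma_card_le {γ : Finset (Scope n k × Fin k)}
    (hcard : (scopesOf n k γ).card = l) : γ.card ≤ l * k := by
  have hsub : γ ⊆ (scopesOf n k γ) ×ˢ (Finset.univ : Finset (Fin k)) := by
    intro e he
    rw [Finset.mem_product]
    exact ⟨mem_scopesOf_of_mem he, Finset.mem_univ _⟩
  calc γ.card ≤ ((scopesOf n k γ) ×ˢ (Finset.univ : Finset (Fin k))).card :=
        Finset.card_le_card hsub
    _ = l * k := by rw [Finset.card_product, hcard]; simp

lemma scopes_eq_image {γ : Finset (Scope n k × Fin k)} {L : Fin l → Scope n k}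
    (hinj : Function.Injective L) (hmem : ∀ i, L i ∈ scopesOf n k γ)
    (hcard : (scopesOf n k γ).card = l) :
    Finset.image L Finset.univ = scopesOf n k γ := by
  apply Finset.eq_of_subset_of_card_le
  · intro S hS
    obtain ⟨i, _, rfl⟩ := Finset.mem_image.1 hS
    exact hmem i
  · rw [hcard, Finset.card_image_of_injective _ hinj, Finset.card_univ, Fintype.card_fin]

lemma cnt_le (hl : 0 < l) {γ : Finset (Scope n k × Fin k)} {L : Fin l → Scope n k}
    (hinj : Function.Injective L) (hmem : ∀ i, L i ∈ scopesOf n k γ)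
    (hcard : (scopesOf n k γ).card = l) :
    ∀ i : Fin n, (γ.filter fun e => e.1.1 e.2 = i).card
      ≤ (Finset.univ.filter fun s : Fin l × Fin k => (L s.1).1 s.2 = i).card := by
  intro i
  haveI : Nonempty (Fin l) := ⟨⟨0, hl⟩⟩
  have himg := scopes_eq_image hinj hmem hcard
  have hexists : ∀ e ∈ γ, ∃ i₀, L i₀ = e.1 := by
    intro e he
    have : e.1 ∈ Finset.image L Finset.univ := himg ▸ mem_scopesOf_of_mem he
    obtain ⟨i₀, _, h⟩ := Finset.mem_image.1 this
    exact ⟨i₀, h⟩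
  apply Finset.card_le_card_of_injOn
    (fun e => ((Function.invFun L e.1, e.2) : Fin l × Fin k))
  · intro e he
    rw [Finset.mem_coe, Finset.mem_filter] at he ⊢
    refine ⟨Finset.mem_univ _, ?_⟩
    have hLe : L (Function.invFun L e.1) = e.1 := Function.invFun_eq (by
      obtain ⟨i₀, h⟩ := hexists e he.1; exact ⟨i₀, h⟩)
    show (L (Function.invFun L e.1)).1 e.2 = i
    rw [hLe]; exact he.2
  · intro e he e' he' hfe
    simp only [Finset.coe_filter, Set.mem_setOf_eq] at he he'
    simp only [Prod.mk.injEq] at hfe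
    have h2 : e.2 = e'.2 := hfe.2
    have h1' : Function.invFun L e.1 = Function.invFun L e'.1 := hfe.1
    have hLe : L (Function.invFun L e.1) = e.1 := Function.invFun_eq (by
      obtain ⟨i₀, h⟩ := hexists e he.1; exact ⟨i₀, h⟩)
    have hLe' : L (Function.invFun L e'.1) = e'.1 := Function.invFun_eq (by
      obtain ⟨i₀, h⟩ := hexists e' he'.1; exact ⟨i₀, h⟩)
    have h1 : e.1 = e'.1 := by rw [← hLe, ← hLe', h1']
    exact Prod.ext h1 h2

end RandomCSP

namespace RandomCSP

/-- counting the nonzero Fourier coefficients with `|γ̄| = l`. -/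
theorem Ncount_bound (k t : ℕ) (hk : 2 ≤ k) (ht : 1 ≤ t) (htk : t ≤ k) :
    ∃ c : ℝ, 0 < c ∧ ∃ C : ℝ, 0 < C ∧
      ∀ n : ℕ, k ≤ n → ∀ α : Finset (Fin n), ∀ l : ℕ,
        (l : ℝ) ≤ c * n / k →
        (Ncount n k t α l : ℝ)
          ≤ C ^ l * (n : ℝ) ^ ((k * l : ℝ) - ((t * l : ℝ) + α.card) / 2)
              * (l : ℝ) ^ (((t * l : ℝ) + α.card) / 2 - l) := by
  classical
  refine ⟨1/4, by norm_num, 2 * Real.exp 1 * (16*(k:ℝ))^k, by positivity, ?_⟩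
  intro n hkn α l hln
  by_cases hbig : α.card ≤ k * l
  swap
  · -- too many odd indices: the count is zero
    have h0 : Ncount n k t α l = 0 := by
      rw [Ncount, Finset.card_eq_zero]
      rw [Finset.filter_eq_empty_iff]
      rintro bg - ⟨hder, _har, _hsub, hcard⟩
      have h1 := alpha_card_le hder
      have h2 := gamma_card_le hcard
      rw [mul_comm l k] at h2
      omega
    rw [h0]
    push_cast
    positivity
  rcases Nat.eq_zero_or_pos l with hl0 | hlpos
  · -- l = 0
    subst hl0
    have hα : α = ∅ := Finset.card_eq_zero.1 (by omega)
    have h1 : Ncount n k t α 0 = 1 := by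
      rw [Ncount, Finset.card_eq_one]
      refine ⟨(∅, ∅), ?_⟩
      ext bg
      simp only [Finset.mem_filter, Finset.mem_univ, true_and, Finset.mem_singleton]
      constructor
      · rintro ⟨hder, _har, hsub, hcard⟩
        have hsc : scopesOf n k bg.2 = ∅ := Finset.card_eq_zero.1 hcard
        have hγ : bg.2 = ∅ := by
          rw [Finset.eq_empty_iff_forall_notMem]
          intro e he
          have := mem_scopesOf_of_mem he
          rw [hsc] at this
          exact absurd this (Finset.notMem_empty _)
        have hβ : bg.1 = ∅ := by
          rw [hγ] at hsub
          simpa [scopesOf] using Finset.subset_empty.1 hsub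
        exact Prod.ext hβ hγ
      · rintro rfl
        refine ⟨?_, ?_, ?_, ?_⟩
        · intro i
          simp [hα]
        · intro S hS
          simp [scopesOf] at hS
        · simp [scopesOf]
        · simp [scopesOf]
    rw [h1, hα]
    norm_num
  · -- main case
    have hk0 : 0 < k := by omega
    have hn0 : 0 < n := by omega
    have hkl4 : (4 * ((k:ℝ) * l)) ≤ n := by
      have hkpos : (0:ℝ) < k := by exact_mod_cast hk0
      rw [le_div_iff₀ hkpos] at hln
      nlinarith
    set Γ := Finset.univ.filter (fun γ : Finset (Scope n k × Fin k) =>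
      derives n k γ α ∧ arityGE n k γ t ∧ (scopesOf n k γ).card = l) with hΓ
    -- Step A : absorb the β's
    have hstepA : Ncount n k t α l ≤ 2^l * Γ.card := by
      rw [Ncount]
      rw [Finset.card_eq_sum_card_fiberwise
        (f := fun bg : Finset (Scope n k) × Finset (Scope n k × Fin k) => bg.2)
        (t := Γ) (by
          intro bg hbg
          rw [Finset.mem_coe, Finset.mem_filter] at hbg
          rw [Finset.mem_coe, hΓ, Finset.mem_filter]
          exact ⟨Finset.mem_univ _, hbg.2.1, hbg.2.2.1, hbg.2.2.2.2⟩)]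
      have hfiber : ∀ γ ∈ Γ,
          ((Finset.univ.filter fun bg : Finset (Scope n k) × Finset (Scope n k × Fin k) =>
            derives n k bg.2 α ∧ arityGE n k bg.2 t ∧ bg.1 ⊆ scopesOf n k bg.2 ∧
              (scopesOf n k bg.2).card = l).filter fun bg => bg.2 = γ).card ≤ 2^l := by
        intro γ hγ
        rw [hΓ, Finset.mem_filter] at hγ
        have hb : ∀ bg ∈ ((Finset.univ.filter fun bg : Finset (Scope n k) × Finset (Scope n k × Fin k) =>
            derives n k bg.2 α ∧ arityGE n k bg.2 t ∧ bg.1 ⊆ scopesOf n k bg.2 ∧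
              (scopesOf n k bg.2).card = l).filter fun bg => bg.2 = γ),
            bg.1 ∈ (scopesOf n k γ).powerset := by
          intro bg hbg
          simp only [Finset.mem_filter, Finset.mem_univ, true_and] at hbg
          rw [Finset.mem_powerset, ← hbg.2]
          exact hbg.1.2.2.1
        have hinj : Set.InjOn (fun bg : Finset (Scope n k) × Finset (Scope n k × Fin k) => bg.1)
            ((Finset.univ.filter fun bg : Finset (Scope n k) × Finset (Scope n k × Fin k) =>
            derives n k bg.2 α ∧ arityGE n k bg.2 t ∧ bg.1 ⊆ scopesOf n k bg.2 ∧
              (scopesOf n k bg.2).card = l).filter fun bg => bg.2 = γ : Finset _) := by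
          intro bg h1 bg' h2 h12
          simp only [Finset.coe_filter, Set.mem_setOf_eq] at h1 h2
          exact Prod.ext h12 (h1.2.trans h2.2.symm)
        calc _ ≤ (scopesOf n k γ).powerset.card := Finset.card_le_card_of_injOn _ hb hinj
          _ = 2^l := by rw [Finset.card_powerset, hγ.2.2.2]
      refine le_trans (Finset.sum_le_sum hfiber) ?_
      rw [Finset.sum_const, smul_eq_mul, mul_comm]
    -- Step B : ordered enumerations
    set Ebar := Finset.univ.filter (fun p : Finset (Scope n k × Fin k) × (Fin l → Scope n k) =>
      (derives n k p.1 α ∧ arityGE n k p.1 t ∧ (scopesOf n k p.1).card = l) ∧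
        Function.Injective p.2 ∧ ∀ i, p.2 i ∈ scopesOf n k p.1) with hEbar
    have hstepB : Γ.card * l.factorial ≤ Ebar.card := by
      rw [Finset.card_eq_sum_card_fiberwise
        (f := fun p : Finset (Scope n k × Fin k) × (Fin l → Scope n k) => p.1)
        (s := Ebar) (t := Γ) (by
          intro p hp
          rw [Finset.mem_coe, hEbar, Finset.mem_filter] at hp
          rw [Finset.mem_coe, hΓ, Finset.mem_filter]
          exact ⟨Finset.mem_univ _, hp.2.1⟩)]
      have hfiber : ∀ γ ∈ Γ, l.factorial ≤ (Ebar.filter fun p => p.1 = γ).card := by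
        intro γ hγ
        rw [hΓ, Finset.mem_filter] at hγ
        rw [← AuxCount.count_enum (scopesOf n k γ) hγ.2.2.2]
        apply Finset.card_le_card_of_injOn (fun L => (γ, L))
        · intro L hL
          rw [Finset.mem_coe, Finset.mem_filter] at hL
          rw [Finset.mem_coe, Finset.mem_filter, hEbar, Finset.mem_filter]
          exact ⟨⟨Finset.mem_univ _, hγ.2, hL.2⟩, rfl⟩
        · intro L h1 L' h2 h12
          exact congrArg Prod.snd h12
      calc Γ.card * l.factorial = ∑ _γ ∈ Γ, l.factorial := by
            rw [Finset.sum_const, smul_eq_mul]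
        _ ≤ ∑ γ ∈ Γ, (Ebar.filter fun p => p.1 = γ).card := Finset.sum_le_sum hfiber
    -- Step C : injective encoding
    set T := (Finset.univ.filter fun e : Fin l × Fin k →
        (Fin n ⊕ ((Fin l × Fin k) ⊕ {i : Fin n // i ∈ α})) × Bool =>
        2 * (Finset.univ.filter fun s => (e s).1.isLeft).card + t * l + α.card ≤ 2 * (l * k))
      with hT
    have hstepC : Ebar.card ≤ T.card := by
      apply Finset.card_le_card_of_injOn
        (fun p : Finset (Scope n k × Fin k) × (Fin l → Scope n k) =>
          fun s : Fin l × Fin k =>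
            (AuxCount.encA α (fun s' : Fin l × Fin k => (p.2 s'.1).1 s'.2) s,
             decide ((p.2 s.1, s.2) ∈ p.1)))
      · intro p hp
        rw [Finset.mem_coe, hEbar, Finset.mem_filter] at hp
        obtain ⟨-, ⟨hder, har, hcard⟩, hinj, hmem⟩ := hp
        rw [Finset.mem_coe, hT, Finset.mem_filter]
        refine ⟨Finset.mem_univ _, ?_⟩
        have heq : (Finset.univ.filter fun s : Fin l × Fin k =>
            (AuxCount.encA α (fun s' : Fin l × Fin k => (p.2 s'.1).1 s'.2) s).isLeft = true)
            = Finset.univ.filter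
              (fun s => AuxCount.freshP α (fun s' : Fin l × Fin k => (p.2 s'.1).1 s'.2) s) := by
          apply Finset.filter_congr
          intro s _
          simp [AuxCount.encA_isLeft]
        show 2 * (Finset.univ.filter fun s : Fin l × Fin k =>
            (AuxCount.encA α (fun s' : Fin l × Fin k => (p.2 s'.1).1 s'.2) s).isLeft = true).card
            + t * l + α.card ≤ 2 * (l * k)
        rw [heq]
        apply AuxCount.fresh_card_bound t α
          (fun i => (p.1.filter fun e => e.1.1 e.2 = i).card)
        · exact hder
        · rw [← card_sum_fibers]
          exact tl_le_card har hcard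
        · exact cnt_le hlpos hinj hmem hcard
      · intro p hp q hq hpq
        simp only [hEbar, Finset.coe_filter, Set.mem_setOf_eq, Finset.mem_univ, true_and]
          at hp hq
        obtain ⟨⟨hderp, harp, hcardp⟩, hinjp, hmemp⟩ := hp
        obtain ⟨⟨hderq, harq, hcardq⟩, hinjq, hmemq⟩ := hq
        have hx : (fun s : Fin l × Fin k => (p.2 s.1).1 s.2)
            = (fun s : Fin l × Fin k => (q.2 s.1).1 s.2) := by
          apply AuxCount.encA_injective α
          funext s
          exact congrArg Prod.fst (congrFun hpq s)
        have hL : p.2 = q.2 := by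
          funext i
          apply Subtype.ext
          funext j
          exact congrFun hx (i, j)
        have hbool : ∀ s : Fin l × Fin k, ((p.2 s.1, s.2) ∈ p.1) ↔ ((q.2 s.1, s.2) ∈ q.1) := by
          intro s
          have := congrArg Prod.snd (congrFun hpq s)
          simpa [decide_eq_decide] using this
        have hγ : p.1 = q.1 := by
          ext e
          constructor
          · intro he
            have hmemsc : e.1 ∈ Finset.image p.2 Finset.univ := by
              rw [scopes_eq_image hinjp hmemp hcardp]
              exact mem_scopesOf_of_mem he
            obtain ⟨i, -, hi⟩ := Finset.mem_image.1 hmemsc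
            have h1 : (p.2 i, e.2) ∈ p.1 := by
              rw [show ((p.2 i, e.2) : Scope n k × Fin k) = e from Prod.ext hi rfl]
              exact he
            have h2 := (hbool (i, e.2)).1 h1
            rw [show ((q.2 i, e.2) : Scope n k × Fin k) = e from
              Prod.ext (by rw [← hL]; exact hi) rfl] at h2
            exact h2
          · intro he
            have hmemsc : e.1 ∈ Finset.image q.2 Finset.univ := by
              rw [scopes_eq_image hinjq hmemq hcardq]
              exact mem_scopesOf_of_mem he
            obtain ⟨i, -, hi⟩ := Finset.mem_image.1 hmemsc
            have h1 : (q.2 i, e.2) ∈ q.1 := by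
              rw [show ((q.2 i, e.2) : Scope n k × Fin k) = e from Prod.ext hi rfl]
              exact he
            have h2 := (hbool (i, e.2)).2 h1
            rw [show ((p.2 i, e.2) : Scope n k × Fin k) = e from
              Prod.ext (by rw [hL]; exact hi) rfl] at h2
            exact h2
        exact Prod.ext hγ hL
    -- Step D : counting T
    have hq2 : (2 * (((l * k : ℕ) : ℝ) + ((α.card : ℕ) : ℝ)) : ℝ) ≤ n := by
      have hb : ((α.card : ℕ) : ℝ) ≤ (k : ℝ) * l := by exact_mod_cast hbig
      push_cast
      nlinarith
    have hTb := AuxCount.T_card_le (n := n) (l := l) (k := k) (t := t) α hlpos hk0 hn0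
      (by rw [mul_comm] at hbig; exact hbig) htk hq2
    -- put everything together
    have hfacpos : (0:ℝ) < l.factorial := by exact_mod_cast l.factorial_pos
    have hlR : (0:ℝ) < l := by exact_mod_cast hlpos
    have hfac := AuxCount.pow_le_exp_mul_factorial l
    set X : ℝ := (((t:ℝ) * (l:ℝ)) + (α.card:ℝ)) / 2 with hX
    set E : ℝ := ((k:ℝ) * (l:ℝ)) - X with hE
    have hNc : (Ncount n k t α l : ℝ) ≤ 2^l * Γ.card := by exact_mod_cast hstepA
    have hGF : (Γ.card : ℝ) * l.factorial ≤ T.card := by exact_mod_cast hstepB.trans hstepC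
    have hBpos : (0:ℝ) ≤ (2:ℝ) ^ (l*k) * 2 ^ (l*k) * (4*(k:ℝ)) ^ (l*k)
        * (n:ℝ) ^ E * (l:ℝ) ^ X := by positivity
    calc (Ncount n k t α l : ℝ) ≤ 2^l * Γ.card := hNc
      _ ≤ 2^l * ((T.card : ℝ) / l.factorial) := by
          apply mul_le_mul_of_nonneg_left _ (by positivity)
          rw [le_div_iff₀ hfacpos]
          exact hGF
      _ ≤ 2^l * (((2:ℝ) ^ (l*k) * 2 ^ (l*k) * (4*(k:ℝ)) ^ (l*k)
            * (n:ℝ) ^ E * (l:ℝ) ^ X) / l.factorial) := by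
          apply mul_le_mul_of_nonneg_left _ (by positivity)
          gcongr
      _ ≤ 2^l * (((2:ℝ) ^ (l*k) * 2 ^ (l*k) * (4*(k:ℝ)) ^ (l*k)
            * (n:ℝ) ^ E * (l:ℝ) ^ X) * (Real.exp l / (l:ℝ)^l)) := by
          apply mul_le_mul_of_nonneg_left _ (by positivity)
          have h1 : (1:ℝ)/(l.factorial : ℝ) ≤ Real.exp l / (l:ℝ)^l := by
            rw [div_le_div_iff₀ hfacpos (pow_pos hlR l)]
            calc (1:ℝ) * (l:ℝ)^l = (l:ℝ)^l := one_mul _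
              _ ≤ Real.exp l * l.factorial := hfac
          calc ((2:ℝ) ^ (l*k) * 2 ^ (l*k) * (4*(k:ℝ)) ^ (l*k)
              * (n:ℝ) ^ E * (l:ℝ) ^ X) / l.factorial
              = ((2:ℝ) ^ (l*k) * 2 ^ (l*k) * (4*(k:ℝ)) ^ (l*k)
              * (n:ℝ) ^ E * (l:ℝ) ^ X) * ((1:ℝ)/(l.factorial : ℝ)) := by
                rw [← div_eq_mul_one_div]
            _ ≤ ((2:ℝ) ^ (l*k) * 2 ^ (l*k) * (4*(k:ℝ)) ^ (l*k)
              * (n:ℝ) ^ E * (l:ℝ) ^ X) * (Real.exp l / (l:ℝ)^l) :=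
                mul_le_mul_of_nonneg_left h1 hBpos
      _ = (2 * Real.exp 1 * (16*(k:ℝ))^k)^l * (n:ℝ) ^ E * (l:ℝ) ^ (X - (l:ℝ)) := by
          have ha : (2:ℝ)^(l*k) * 2^(l*k) * (4*(k:ℝ))^(l*k) = ((16*(k:ℝ))^k)^l := by
            rw [← mul_pow, ← mul_pow, show (2:ℝ)*2*(4*(k:ℝ)) = 16*(k:ℝ) by ring,
              mul_comm l k, pow_mul]
          have hb : Real.exp ((l:ℕ):ℝ) = (Real.exp 1)^l := by
            rw [← Real.exp_nat_mul, mul_one]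
          have hc : (l:ℝ) ^ (X - (l:ℝ)) = (l:ℝ)^X / (l:ℝ)^(l:ℕ) := by
            rw [Real.rpow_sub hlR, Real.rpow_natCast]
          have hC : (2 * Real.exp 1 * (16*(k:ℝ))^k)^l
              = 2^l * (Real.exp 1)^l * ((16*(k:ℝ))^k)^l := by
            rw [mul_pow, mul_pow]
          rw [ha, hb, hc, hC]
          have hll : ((l:ℝ))^(l:ℕ) ≠ 0 := by positivity
          field_simp



end RandomCSP
end
end
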